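/- arXiv:2008.13623 — 5 statements merged into one kernel-verified Lean document; each statement's English description precedes it below -/
import Mathlib

section
/- Let H be a real Hilbert space and let C : [0,∞) → Conv_H satisfy e(C(t),C(s)) ≤ s − t whenever 0 ≤ t ≤ s. Let y : [0,∞) → H be locally Lipschitz with y(t) ∈ C(t) for every t ≥ 0. Then the following are equivalent: (i) −y′(t) ∈ N_{C(t)}(y(t)) for Lebesgue-a.e. t ∈ [0,T], for every T > 0; (ii) ∫₀ᵀ ⟨y(t) − z(t), y′(t)⟩ dt ≤ 0 for every T > 0 and every bounded Lebesgue-measurable function z : [0,T] → H with z(t) ∈ C(t) for every t ∈ [0,T]. -/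
open Filter Metric Set MeasureTheory Topology Function
open scoped ENNReal NNReal

variable {H : Type*} [NormedAddCommGroup H] [InnerProductSpace ℝ H]

/-- A nonempty closed convex subset of `H` (an element of `Conv_H`). -/
def IsConvexBody (K : Set H) : Prop := K.Nonempty ∧ IsClosed K ∧ Convex ℝ K

/-- The excess `e(A,B) = sup_{x ∈ A} dist(x,B)` of `A` over `B`. -/
noncomputable def excess (A B : Set H) : ℝ≥0∞ := ⨆ x ∈ A, EMetric.infEdist x B

/-- The retraction `ret(C,J)` of the moving set `C` on `J`. -/
noncomputable def ret (C : ℝ → Set H) (J : Set ℝ) : ℝ≥0∞ :=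
  ⨆ (m : ℕ) (t : Fin (m + 1) → ℝ) (_ : StrictMono t) (_ : ∀ i, t i ∈ J),
    ∑ i : Fin m, excess (C (t (Fin.castSucc i))) (C (t (Fin.succ i)))

/-- `C` has locally bounded retraction on `[0,∞)`. -/
def LocBddRet (C : ℝ → Set H) : Prop := ∀ a b : ℝ, 0 ≤ a → ret C (Icc a b) ≠ ⊤

/-- The pointwise variation of `f` on `J`. -/
noncomputable def pVar (f : ℝ → H) (J : Set ℝ) : ℝ≥0∞ :=
  ⨆ (m : ℕ) (t : Fin (m + 1) → ℝ) (_ : StrictMono t) (_ : ∀ i, t i ∈ J),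
    ∑ i : Fin m, edist (f (t (Fin.castSucc i))) (f (t (Fin.succ i)))

/-- `f` has locally bounded variation on `[0,∞)`. -/
def LocBV (f : ℝ → H) : Prop := ∀ a b : ℝ, 0 ≤ a → pVar f (Icc a b) ≠ ⊤

/-- The exterior normal cone `N_K(x)`. -/
def normalCone (K : Set H) (x : H) : Set H :=
  {u : H | ∀ v ∈ K, (inner ℝ (v - x) u : ℝ) ≤ 0}

/-- `p` is the metric projection of `x` onto `K`. -/
def IsProj (K : Set H) (x p : H) : Prop :=
  p ∈ K ∧ ∀ v ∈ K, ‖x - p‖ ≤ ‖x - v‖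

/-- `C(t+) = {x : dist(x, C(s)) → 0 as s → t+}`. -/
def rightLimSet (C : ℝ → Set H) (t : ℝ) : Set H :=
  {x : H | Tendsto (fun s => infDist x (C s)) (𝓝[>] t) (𝓝 0)}

/-- `C(t−)`, with the convention `C(0−) := C(0)`. -/
noncomputable def leftLimSet (C : ℝ → Set H) (t : ℝ) : Set H :=
  if t = 0 then C 0 else {x : H | Tendsto (fun s => infDist x (C s)) (𝓝[<] t) (𝓝 0)}

/-- The continuity set of `C` with respect to the excess. -/
noncomputable def contSet (C : ℝ → Set H) : Set ℝ :=
  {t | excess (C t) (rightLimSet C t) = 0 ∧ excess (leftLimSet C t) (C t) = 0}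

set_option linter.unusedSectionVars false

section AuxProj
variable [CompleteSpace H]

noncomputable def proj (K : Set H) (x : H) : H :=
  @dite _ (∃ p, IsProj K x p) (Classical.propDecidable _) (fun h => h.choose) (fun _ => x)

variable [CompleteSpace H]

lemma exists_isProj {K : Set H} (hK : IsConvexBody K) (x : H) : ∃ p, IsProj K x p := by
  obtain ⟨hne, hcl, hconv⟩ := hK
  obtain ⟨v, hv, hmin⟩ := exists_norm_eq_iInf_of_complete_convex hne hcl.isComplete hconv x
  refine ⟨v, hv, fun w hw => ?_⟩
  rw [hmin]
  exact ciInf_le ⟨0, Set.forall_mem_range.2 fun _ => norm_nonneg _⟩ (⟨w, hw⟩ : K)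

lemma isProj_proj {K : Set H} (hK : IsConvexBody K) (x : H) : IsProj K x (proj K x) := by
  have h := exists_isProj hK x
  rw [proj, dif_pos h]
  exact h.choose_spec

omit [CompleteSpace H] in
lemma IsProj.norm_eq_iInf {K : Set H} {x p : H} (h : IsProj K x p) :
    ‖x - p‖ = ⨅ w : K, ‖x - w‖ := by
  haveI : Nonempty K := ⟨⟨p, h.1⟩⟩
  refine le_antisymm (le_ciInf fun w => h.2 w w.2) ?_
  exact ciInf_le ⟨0, Set.forall_mem_range.2 fun _ => norm_nonneg _⟩ (⟨p, h.1⟩ : K)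

omit [CompleteSpace H] in
lemma IsProj.inner_le {K : Set H} (hconv : Convex ℝ K) {x p : H} (h : IsProj K x p) :
    ∀ w ∈ K, (inner ℝ (x - p) (w - p) : ℝ) ≤ 0 :=
  (norm_eq_iInf_iff_real_inner_le_zero hconv h.1).1 h.norm_eq_iInf

lemma proj_mem {K : Set H} (hK : IsConvexBody K) (x : H) : proj K x ∈ K :=
  (isProj_proj hK x).1

lemma proj_inner_le {K : Set H} (hK : IsConvexBody K) (x : H) :
    ∀ w ∈ K, (inner ℝ (x - proj K x) (w - proj K x) : ℝ) ≤ 0 :=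
  (isProj_proj hK x).inner_le hK.2.2

lemma proj_norm_le {K : Set H} (hK : IsConvexBody K) (x₁ x₂ : H) :
    ‖proj K x₁ - proj K x₂‖ ≤ ‖x₁ - x₂‖ := by
  set p₁ := proj K x₁
  set p₂ := proj K x₂
  have h₁ : (inner ℝ (x₁ - p₁) (p₂ - p₁) : ℝ) ≤ 0 := proj_inner_le hK x₁ p₂ (proj_mem hK x₂)
  have h₂ : (inner ℝ (x₂ - p₂) (p₁ - p₂) : ℝ) ≤ 0 := proj_inner_le hK x₂ p₁ (proj_mem hK x₁)
  have h2' : (0:ℝ) ≤ inner ℝ (x₂ - p₂) (p₂ - p₁) := by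
    have e : (inner ℝ (x₂ - p₂) (p₂ - p₁) : ℝ) = - inner ℝ (x₂ - p₂) (p₁ - p₂) := by
      rw [← inner_neg_right]; congr 1; abel
    rw [e]; linarith
  have h4 : (inner ℝ (x₁ - p₁ - (x₂ - p₂)) (p₂ - p₁) : ℝ) ≤ 0 := by
    rw [inner_sub_left]; linarith
  have h5 : x₁ - p₁ - (x₂ - p₂) = (x₁ - x₂) + (p₂ - p₁) := by abel
  rw [h5, inner_add_left, real_inner_self_eq_norm_sq] at h4
  have cs := abs_real_inner_le_norm (x₁ - x₂) (p₂ - p₁)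
  have habs := neg_abs_le ((inner ℝ (x₁ - x₂) (p₂ - p₁)) : ℝ)
  have hnrev : ‖p₁ - p₂‖ = ‖p₂ - p₁‖ := norm_sub_rev _ _
  rw [hnrev]
  nlinarith [norm_nonneg (p₂ - p₁), norm_nonneg (x₁ - x₂)]

lemma IsProj.norm_eq_infDist {K : Set H} {x p : H} (h : IsProj K x p) :
    ‖x - p‖ = infDist x K := by
  refine le_antisymm ?_ ?_
  · by_contra hlt
    push_neg at hlt
    obtain ⟨w, hw, hdw⟩ := (infDist_lt_iff ⟨p, h.1⟩).1 hlt
    exact absurd (h.2 w hw) (by rw [← dist_eq_norm x w] at *; linarith [h.2 w hw])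
  · rw [← dist_eq_norm x p]
    exact infDist_le_dist_of_mem h.1

set_option linter.unusedSectionVars false

section moving
variable {C : ℝ → Set H}

omit [CompleteSpace H] in
/-- one-sided Lipschitz excess gives a distance bound for points of `C t`. -/
lemma infDist_point_le (hLip : ∀ t s : ℝ, 0 ≤ t → t ≤ s → excess (C t) (C s) ≤ ENNReal.ofReal (s - t))
    {t s : ℝ} (ht : 0 ≤ t) (hts : t ≤ s) {v : H} (hv : v ∈ C t) :
    infDist v (C s) ≤ s - t := by
  have h1 : EMetric.infEdist v (C s) ≤ ENNReal.ofReal (s - t) := by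
    refine le_trans ?_ (hLip t s ht hts)
    exact le_iSup₂ (f := fun x (_ : x ∈ C t) => EMetric.infEdist x (C s)) v hv
  rw [infDist]
  calc (EMetric.infEdist v (C s)).toReal ≤ (ENNReal.ofReal (s - t)).toReal :=
        ENNReal.toReal_mono (by simp) h1
    _ = s - t := ENNReal.toReal_ofReal (by linarith)

omit [CompleteSpace H] in
lemma infDist_moving_le (hC : ∀ t : ℝ, 0 ≤ t → IsConvexBody (C t))
    (hLip : ∀ t s : ℝ, 0 ≤ t → t ≤ s → excess (C t) (C s) ≤ ENNReal.ofReal (s - t))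
    (x : H) {t s : ℝ} (ht : 0 ≤ t) (hts : t ≤ s) :
    infDist x (C s) ≤ infDist x (C t) + (s - t) := by
  refine le_of_forall_pos_le_add fun ε hε => ?_
  obtain ⟨v, hv, hdv⟩ := (infDist_lt_iff (hC t ht).1).1
    (lt_add_of_pos_right (infDist x (C t)) hε)
  calc infDist x (C s) ≤ infDist v (C s) + dist x v := infDist_le_infDist_add_dist
    _ ≤ (s - t) + (infDist x (C t) + ε) :=
        add_le_add (infDist_point_le hLip ht hts hv) hdv.le
    _ = infDist x (C t) + (s - t) + ε := by ring

/-- the adjusted distance function, extended constantly to the left of 0 -/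
noncomputable def dd (C : ℝ → Set H) (x : H) : ℝ → ℝ := fun t => infDist x (C (max t 0))

omit [CompleteSpace H] in
lemma dd_antitone (hC : ∀ t : ℝ, 0 ≤ t → IsConvexBody (C t))
    (hLip : ∀ t s : ℝ, 0 ≤ t → t ≤ s → excess (C t) (C s) ≤ ENNReal.ofReal (s - t))
    (x : H) : Antitone (fun t => dd C x t - max t 0) := by
  intro t s hts
  simp only [dd]
  have h := infDist_moving_le hC hLip x (le_max_right t 0) (max_le_max hts le_rfl)
  linarith [h]

omit [CompleteSpace H] in
lemma dd_countable_discont (hC : ∀ t : ℝ, 0 ≤ t → IsConvexBody (C t))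
    (hLip : ∀ t s : ℝ, 0 ≤ t → t ≤ s → excess (C t) (C s) ≤ ENNReal.ofReal (s - t))
    (x : H) : {t : ℝ | ¬ContinuousAt (dd C x) t}.Countable := by
  refine ((dd_antitone hC hLip x).countable_not_continuousAt).mono ?_
  intro t ht
  simp only [mem_setOf_eq] at *
  intro hcont
  apply ht
  have hmax : ContinuousAt (fun t : ℝ => max t 0) t := (continuous_id.max continuous_const).continuousAt
  have h2 : ContinuousAt (fun s => (dd C x s - max s 0) + max s 0) t := hcont.add hmax
  simpa using h2

lemma proj_rightCont (hC : ∀ t : ℝ, 0 ≤ t → IsConvexBody (C t))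
    (hLip : ∀ t s : ℝ, 0 ≤ t → t ≤ s → excess (C t) (C s) ≤ ENNReal.ofReal (s - t))
    (x : H) {t : ℝ} (ht : 0 ≤ t) (hd : ContinuousAt (dd C x) t) :
    Tendsto (fun s => proj (C s) x) (𝓝[>] t) (𝓝 (proj (C t) x)) := by
  have hbody : ∀ s, t < s → IsConvexBody (C s) := fun s hs => hC s (le_trans ht hs.le)
  set p := proj (C t) x with hp
  have hpmem : p ∈ C t := proj_mem (hC t ht) x
  have hqex : ∀ s, t < s → ∃ v ∈ C s, dist p v < 2 * (s - t) := by
    intro s hs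
    have h1 : infDist p (C s) ≤ s - t := infDist_point_le hLip ht hs.le hpmem
    exact (infDist_lt_iff (hbody s hs).1).1 (lt_of_le_of_lt h1 (by linarith))
  choose! q hqmem hqdist using hqex
  have hddt : dd C x t = ‖x - p‖ := by
    rw [dd, max_eq_left ht]
    exact ((isProj_proj (hC t ht) x).norm_eq_infDist).symm
  have hds_eq : ∀ s, t < s → dd C x s = ‖x - proj (C s) x‖ := by
    intro s hs
    rw [dd, max_eq_left (le_trans ht hs.le)]
    exact ((isProj_proj (hbody s hs) x).norm_eq_infDist).symm
  have hnormq : ∀ s, t < s → ‖x - q s‖ ≤ dd C x t + 2 * (s - t) := by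
    intro s hs
    have e : x - q s = (x - p) + (p - q s) := by abel
    rw [e, hddt]
    refine (norm_add_le _ _).trans ?_
    have := hqdist s hs
    rw [dist_eq_norm] at this
    linarith
  have hkey : ∀ s, t < s → ‖proj (C s) x - p‖ ≤
      Real.sqrt (2 * (dd C x t + 2 * (s - t))^2 - 2 * (dd C x s)^2) + 2 * (s - t) := by
    intro s hs
    set a := proj (C s) x with ha
    have hamem : a ∈ C s := proj_mem (hbody s hs) x
    have hmid : (1/2 : ℝ) • a + (1/2 : ℝ) • q s ∈ C s :=
      (hbody s hs).2.2 hamem (hqmem s hs) (by norm_num) (by norm_num) (by norm_num)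
    have hdm : dd C x s ≤ ‖x - ((1/2:ℝ) • a + (1/2:ℝ) • q s)‖ := by
      rw [dd, max_eq_left (le_trans ht hs.le), ← dist_eq_norm]
      exact infDist_le_dist_of_mem hmid
    have par := parallelogram_law_with_norm ℝ (x - a) (x - q s)
    have hqa : (x - a) - (x - q s) = q s - a := by abel
    have hsum : (x - a) + (x - q s) = (2:ℝ) • (x - ((1/2:ℝ) • a + (1/2:ℝ) • q s)) := by
      module
    rw [hqa, hsum, norm_smul] at par
    simp only [Real.norm_ofNat] at par
    have hxa : ‖x - a‖ = dd C x s := (hds_eq s hs).symm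
    rw [hxa] at par
    ring_nf at par
    have h6 : ‖a - q s‖^2 ≤ 2 * (dd C x t + 2 * (s - t))^2 - 2 * (dd C x s)^2 := by
      have hq2 : ‖x - q s‖^2 ≤ (dd C x t + 2 * (s - t))^2 := by
        have h0 := hnormq s hs
        nlinarith [norm_nonneg (x - q s)]
      have hm2 : (dd C x s)^2 ≤ ‖x - ((1/2:ℝ) • a + (1/2:ℝ) • q s)‖^2 := by
        have h0 : 0 ≤ dd C x s := by rw [hds_eq s hs]; exact norm_nonneg _
        nlinarith [hdm]
      have hrev : ‖a - q s‖ = ‖q s - a‖ := norm_sub_rev _ _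
      rw [hrev]
      nlinarith [par, hq2, hm2]
    have h7 : ‖a - q s‖ ≤ Real.sqrt (2 * (dd C x t + 2 * (s - t))^2 - 2 * (dd C x s)^2) := by
      rw [← Real.sqrt_sq (norm_nonneg (a - q s))]
      exact Real.sqrt_le_sqrt h6
    have e : a - p = (a - q s) + (q s - p) := by abel
    rw [e]
    refine (norm_add_le _ _).trans ?_
    have hqd := hqdist s hs
    rw [dist_comm, dist_eq_norm] at hqd
    linarith
  have hst : Tendsto (fun s : ℝ => s - t) (𝓝[>] t) (𝓝 0) := by
    have h0 : Tendsto (fun s : ℝ => s - t) (𝓝 t) (𝓝 (t - t)) :=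
      (continuous_id.sub continuous_const).tendsto t
    rw [sub_self] at h0
    exact h0.mono_left nhdsWithin_le_nhds
  have hdt : Tendsto (fun s => dd C x s) (𝓝[>] t) (𝓝 (dd C x t)) :=
    hd.tendsto.mono_left nhdsWithin_le_nhds
  have h1 : Tendsto (fun s => 2 * (dd C x t + 2 * (s - t))^2 - 2 * (dd C x s)^2) (𝓝[>] t)
      (𝓝 0) := by
    have := ((((hst.const_mul 2).const_add (dd C x t)).pow 2).const_mul 2).sub
      ((hdt.pow 2).const_mul 2)
    simpa using this
  have hB : Tendsto (fun s => Real.sqrt (2 * (dd C x t + 2 * (s - t))^2 - 2 * (dd C x s)^2)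
      + 2 * (s - t)) (𝓝[>] t) (𝓝 0) := by
    have hsq : Tendsto (fun s => Real.sqrt (2 * (dd C x t + 2 * (s - t))^2 - 2 * (dd C x s)^2))
        (𝓝[>] t) (𝓝 0) := by
      have := (Real.continuous_sqrt.tendsto 0).comp h1
      simpa [Function.comp_def] using this
    simpa using hsq.add (hst.const_mul 2)
  have hlim : Tendsto (fun s => proj (C s) x - p) (𝓝[>] t) (𝓝 0) := by
    refine squeeze_zero_norm' ?_ hB
    filter_upwards [self_mem_nhdsWithin] with s hs
    exact hkey s hs
  exact tendsto_sub_nhds_zero_iff.mp hlim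

end moving

section meas

omit [CompleteSpace H] in
/-- composition of an arbitrary function with a countably-valued measurable map is
strongly measurable. -/
lemma sm_comp_countable {g : ℝ → ℝ} (hg : Measurable g) {S : Set ℝ} (hS : S.Countable)
    (hrange : range g ⊆ S) (f : ℝ → H) : StronglyMeasurable (f ∘ g) := by
  borelize H
  rw [stronglyMeasurable_iff_measurable_separable]
  constructor
  · intro s hs
    have e : (f ∘ g) ⁻¹' s = ⋃ v ∈ (f ⁻¹' s) ∩ S, g ⁻¹' {v} := by
      ext u
      simp only [mem_preimage, comp_apply, mem_iUnion, mem_inter_iff, mem_singleton_iff]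
      constructor
      · intro h
        exact ⟨g u, ⟨⟨h, hrange (mem_range_self u)⟩, rfl⟩⟩
      · rintro ⟨v, ⟨hv, _⟩, rfl⟩
        exact hv
    rw [e]
    exact MeasurableSet.biUnion (hS.mono inter_subset_right)
      (fun v _ => hg (measurableSet_singleton v))
  · refine (hS.image f).isSeparable.mono ?_
    rintro _ ⟨u, rfl⟩
    exact mem_image_of_mem f (hrange (mem_range_self u))

omit [CompleteSpace H] in
/-- a function right-continuous off a countable set is a.e. strongly measurable on `[0,∞)`. -/
lemma aesm_of_rightCont (f : ℝ → H) {S : Set ℝ} (hS : S.Countable)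
    (hf : ∀ t : ℝ, 0 ≤ t → t ∉ S → Tendsto f (𝓝[>] t) (𝓝 (f t))) :
    AEStronglyMeasurable f ((volume : Measure ℝ).restrict (Ici 0)) := by
  set c : ℕ → ℝ → ℝ := fun n t => ((⌊t * 2^n⌋ : ℝ) + 1) / 2^n with hc
  have hcm : ∀ n, Measurable (c n) := by
    intro n
    have hm1 : Measurable fun t : ℝ => ⌊t * 2^n⌋ := (measurable_id.mul_const _).floor
    have hm2 : Measurable fun k : ℤ => ((k:ℝ) + 1)/2^n := measurable_from_top
    exact hm2.comp hm1
  have hrange : ∀ n, range (c n) ⊆ range (fun k : ℤ => ((k : ℝ) + 1) / 2^n) := by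
    rintro n _ ⟨t, rfl⟩
    exact ⟨⌊t * 2^n⌋, rfl⟩
  have hsm : ∀ n, StronglyMeasurable (f ∘ c n) := fun n =>
    sm_comp_countable (hcm n) (countable_range _) (hrange n) f
  have hclim : ∀ t : ℝ, Tendsto (fun n => c n t) atTop (𝓝[>] t) := by
    intro t
    rw [tendsto_nhdsWithin_iff]
    constructor
    · have hub : ∀ n : ℕ, c n t ≤ t + (2:ℝ)⁻¹ ^ n := by
        intro n
        rw [hc]
        simp only
        rw [div_le_iff₀ (by positivity)]
        have := Int.floor_le (t * 2^n)
        have h2 : ((2:ℝ)⁻¹)^n * 2^n = 1 := by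
          rw [← mul_pow]; norm_num
        nlinarith [this]
      have hlb : ∀ n : ℕ, t ≤ c n t := by
        intro n
        rw [hc]
        simp only
        rw [le_div_iff₀ (by positivity)]
        have := Int.lt_floor_add_one (t * 2^n)
        linarith
      refine tendsto_of_tendsto_of_tendsto_of_le_of_le tendsto_const_nhds ?_ hlb hub
      have : Tendsto (fun n : ℕ => (2:ℝ)⁻¹ ^ n) atTop (𝓝 0) :=
        tendsto_pow_atTop_nhds_zero_of_lt_one (by norm_num) (by norm_num)
      simpa using tendsto_const_nhds.add this
    · refine Eventually.of_forall fun n => ?_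
      rw [hc]
      simp only [mem_Ioi]
      rw [lt_div_iff₀ (by positivity)]
      exact Int.lt_floor_add_one (t * 2^n)
  have hae : ∀ᵐ t ∂((volume : Measure ℝ).restrict (Ici 0)),
      Tendsto (fun n => (f ∘ c n) t) atTop (𝓝 (f t)) := by
    have h1 : ∀ᵐ t ∂((volume : Measure ℝ).restrict (Ici 0)), t ∈ Ici (0:ℝ) :=
      ae_restrict_mem measurableSet_Ici
    have h2 : ∀ᵐ t ∂((volume : Measure ℝ).restrict (Ici 0)), t ∉ S :=
      ae_restrict_of_ae (measure_eq_zero_iff_ae_notMem.mp (hS.measure_zero volume))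
    filter_upwards [h1, h2] with t ht htS
    exact (hf t ht htS).comp (hclim t)
  exact aestronglyMeasurable_of_tendsto_ae atTop (fun n => (hsm n).aestronglyMeasurable) hae

end meas

section l5
variable {C : ℝ → Set H}

lemma proj_comp_aesm (hC : ∀ t : ℝ, 0 ≤ t → IsConvexBody (C t))
    (hLip : ∀ t s : ℝ, 0 ≤ t → t ≤ s → excess (C t) (C s) ≤ ENNReal.ofReal (s - t))
    (u : ℝ → H) (hu : Continuous u) :
    AEStronglyMeasurable (fun s => proj (C s) (u s))
      ((volume : Measure ℝ).restrict (Ici 0)) := by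
  obtain ⟨c, hc_count, hc_dense⟩ : ∃ c : Set H, c.Countable ∧ range u ⊆ closure c := by
    obtain ⟨c, h1, h2⟩ := TopologicalSpace.isSeparable_range hu
    exact ⟨c, h1, h2⟩
  set S : Set ℝ := ⋃ x ∈ c, {t | ¬ContinuousAt (dd C x) t} with hSdef
  have hScount : S.Countable :=
    hc_count.biUnion (fun x _ => dd_countable_discont hC hLip x)
  refine aesm_of_rightCont _ hScount ?_
  intro t ht htS
  rw [Metric.tendsto_nhds]
  intro ε hε
  have hut : u t ∈ closure c := hc_dense (mem_range_self t)
  obtain ⟨x, hxc, hxd⟩ := Metric.mem_closure_iff.1 hut (ε/4) (by linarith)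
  have hx_cont : ContinuousAt (dd C x) t := by
    by_contra h
    exact htS (mem_biUnion hxc h)
  have h2 := proj_rightCont hC hLip x ht hx_cont
  rw [Metric.tendsto_nhds] at h2
  have h2' := h2 (ε/4) (by linarith)
  have h3 : ∀ᶠ s in 𝓝[>] t, dist (u s) (u t) < ε/4 := by
    have := (hu.tendsto t).mono_left (nhdsWithin_le_nhds (s := Ioi t))
    rw [Metric.tendsto_nhds] at this
    exact this (ε/4) (by linarith)
  filter_upwards [h2', h3, self_mem_nhdsWithin] with s h2s h3s hsIoi
  have hs0 : (0:ℝ) ≤ s := le_trans ht (le_of_lt hsIoi)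
  have hbs : IsConvexBody (C s) := hC s hs0
  have hbt : IsConvexBody (C t) := hC t ht
  have e1 : dist (proj (C s) (u s)) (proj (C s) x) ≤ dist (u s) x := by
    rw [dist_eq_norm, dist_eq_norm]
    exact proj_norm_le hbs _ _
  have e3 : dist (proj (C t) x) (proj (C t) (u t)) ≤ dist x (u t) := by
    rw [dist_eq_norm, dist_eq_norm]
    exact proj_norm_le hbt _ _
  have e4 : dist (u s) x ≤ dist (u s) (u t) + dist (u t) x := dist_triangle _ _ _
  calc dist (proj (C s) (u s)) (proj (C t) (u t))
      ≤ dist (proj (C s) (u s)) (proj (C s) x) + dist (proj (C s) x) (proj (C t) x)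
        + dist (proj (C t) x) (proj (C t) (u t)) := dist_triangle4 _ _ _ _
    _ < (dist (u s) (u t) + dist (u t) x) + ε/4 + dist x (u t) := by
        have := e1.trans e4
        rw [dist_comm x (u t)] at *
        linarith [e3]
    _ < ε := by
        rw [dist_comm (u t) x] at *
        linarith

end l5

omit [CompleteSpace H] in
lemma cont_y0 (y : ℝ → H) (hy : ∀ a b : ℝ, 0 ≤ a → ∃ L : ℝ≥0, LipschitzOnWith L y (Icc a b)) :
    Continuous (fun s => y (max s 0)) := by
  rw [continuous_iff_continuousAt]
  intro s
  set b := |s| + 1 with hb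
  obtain ⟨L, hL⟩ := hy 0 b le_rfl
  have hls : LipschitzOnWith L (fun s => y (max s 0)) (Icc (-b) b) := by
    refine LipschitzOnWith.of_dist_le_mul fun u hu v hv => ?_
    have hmu : max u 0 ∈ Icc (0:ℝ) b := ⟨le_max_right _ _, max_le hu.2 (by positivity)⟩
    have hmv : max v 0 ∈ Icc (0:ℝ) b := ⟨le_max_right _ _, max_le hv.2 (by positivity)⟩
    refine (hL.dist_le_mul _ hmu _ hmv).trans ?_
    have h1 : dist (max u 0) (max v 0) ≤ dist u v := by
      rw [Real.dist_eq, Real.dist_eq]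
      exact abs_max_sub_max_le_abs _ _ _
    exact mul_le_mul_of_nonneg_left h1 L.2
  refine (hls.continuousOn).continuousAt (Icc_mem_nhds ?_ ?_)
  · nlinarith [neg_abs_le s, abs_nonneg s]
  · nlinarith [le_abs_self s, abs_nonneg s]

lemma key_T (C : ℝ → Set H) (hC : ∀ t : ℝ, 0 ≤ t → IsConvexBody (C t))
    (hLip : ∀ t s : ℝ, 0 ≤ t → t ≤ s → excess (C t) (C s) ≤ ENNReal.ofReal (s - t))
    (y : ℝ → H) (hy : ∀ a b : ℝ, 0 ≤ a → ∃ L : ℝ≥0, LipschitzOnWith L y (Icc a b))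
    (hyC : ∀ t : ℝ, 0 ≤ t → y t ∈ C t)
    (y' : ℝ → H)
    (hy' : ∀ᵐ t ∂(volume : Measure ℝ), 0 ≤ t → HasDerivWithinAt y (y' t) (Ici 0) t)
    (hint : ∀ T : ℝ, 0 < T → ∀ z : ℝ → H,
      AEStronglyMeasurable z (volume.restrict (Icc 0 T)) →
      (∃ M : ℝ, ∀ t ∈ Icc (0:ℝ) T, ‖z t‖ ≤ M) →
      (∀ t ∈ Icc (0:ℝ) T, z t ∈ C t) →
      (∫ t in Icc (0:ℝ) T, (inner ℝ (y t - z t) (y' t) : ℝ)) ≤ 0)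
    {T : ℝ} (hT : 0 < T) :
    ∀ᵐ t ∂((volume : Measure ℝ).restrict (Icc 0 T)), -y' t ∈ normalCone (C t) (y t) := by
  classical
  obtain ⟨L, hL⟩ := hy 0 (T + 1) le_rfl
  set μT := (volume : Measure ℝ).restrict (Icc 0 T) with hμT
  set y₀ : ℝ → H := fun s => y (max s 0) with hy₀def
  have hy₀ : Continuous y₀ := cont_y0 y hy
  set D : ℕ → ℝ → H := fun m s => ((m : ℝ) + 1) • (y₀ (s + 1/((m:ℝ)+1)) - y₀ s) with hDdef
  have hDcont : ∀ m, Continuous (D m) := fun m =>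
    ((hy₀.comp (continuous_id.add continuous_const)).sub hy₀).const_smul _
  set u : ℕ → ℝ → H := fun m s => y₀ s - D m s with hudef
  have hucont : ∀ m, Continuous (u m) := fun m => hy₀.sub (hDcont m)
  set w : ℝ → H := fun t => y t - y' t with hwdef
  set z : ℝ → H := fun t => proj (C t) (w t) with hzdef
  -- basic a.e. facts
  have A1 : ∀ᵐ t ∂μT, t ∈ Icc (0:ℝ) T := ae_restrict_mem measurableSet_Icc
  have A2 : ∀ᵐ t ∂μT, HasDerivWithinAt y (y' t) (Ici 0) t := by
    filter_upwards [A1, ae_restrict_of_ae hy'] with t ht hder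
    exact hder ht.1
  have A3 : ∀ᵐ t ∂μT, Tendsto (fun m => D m t) atTop (𝓝 (y' t)) := by
    filter_upwards [A1, A2] with t ht hder
    rw [hasDerivWithinAt_iff_tendsto_slope] at hder
    have hseq : Tendsto (fun m : ℕ => t + 1/((m:ℝ)+1)) atTop (𝓝[Ici 0 \ {t}] t) := by
      rw [tendsto_nhdsWithin_iff]
      constructor
      · simpa using (tendsto_const_nhds (x := t)).add tendsto_one_div_add_atTop_nhds_zero_nat
      · refine Eventually.of_forall fun m => ⟨?_, ?_⟩
        · have : (0:ℝ) < 1/((m:ℝ)+1) := by positivity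
          simp only [mem_Ici]; linarith [ht.1]
        · simp only [mem_singleton_iff]
          have : (0:ℝ) < 1/((m:ℝ)+1) := by positivity
          intro hcon; linarith [hcon.symm ▸ (lt_add_of_pos_right t this)]
    have hcomp := hder.comp hseq
    have heq : ∀ m : ℕ, D m t = slope y t (t + 1/((m:ℝ)+1)) := by
      intro m
      have h0 : (0:ℝ) < 1/((m:ℝ)+1) := by positivity
      have h1 : max t 0 = t := max_eq_left ht.1
      have h2 : max (t + 1/((m:ℝ)+1)) 0 = t + 1/((m:ℝ)+1) :=
        max_eq_left (by linarith [ht.1])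
      simp only [hDdef, hy₀def, h1, h2, slope, vsub_eq_sub, add_sub_cancel_left]
      rw [one_div, inv_inv]
    rw [show (fun m => D m t) = fun m : ℕ => slope y t (t + 1/((m:ℝ)+1)) from funext heq]
    exact hcomp
  have A4 : ∀ᵐ t ∂μT, Tendsto (fun m => proj (C t) (u m t)) atTop (𝓝 (z t)) := by
    filter_upwards [A1, A3] with t ht hDlim
    have hbody := hC t ht.1
    have hnorm : ∀ m, ‖proj (C t) (u m t) - z t‖ ≤ ‖D m t - y' t‖ := by
      intro m
      refine (proj_norm_le hbody _ _).trans_eq ?_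
      have h1 : max t 0 = t := max_eq_left ht.1
      simp only [hudef, hwdef, hy₀def, h1]
      rw [show y t - D m t - (y t - y' t) = -(D m t - y' t) by abel, norm_neg]
    have hlim0 : Tendsto (fun m => ‖D m t - y' t‖) atTop (𝓝 0) := by
      have := (hDlim.sub (tendsto_const_nhds (x := y' t))).norm
      simpa using this
    have := squeeze_zero_norm hnorm hlim0
    exact tendsto_sub_nhds_zero_iff.mp this
  have hzm : AEStronglyMeasurable z μT := by
    have hmono : μT ≤ (volume : Measure ℝ).restrict (Ici 0) :=
      Measure.restrict_mono Icc_subset_Ici_self le_rfl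
    have hm : ∀ m : ℕ, AEStronglyMeasurable (fun s => proj (C s) (u m s)) μT := fun m =>
      (proj_comp_aesm hC hLip (u m) (hucont m)).mono_measure hmono
    exact aestronglyMeasurable_of_tendsto_ae atTop hm A4
  have A5 : ∀ᵐ t ∂μT, ‖y' t‖ ≤ (L : ℝ) := by
    filter_upwards [A1, A3] with t ht hDlim
    refine le_of_tendsto hDlim.norm (Eventually.of_forall fun m => ?_)
    have h0 : (0:ℝ) < 1/((m:ℝ)+1) := by positivity
    have h1 : max t 0 = t := max_eq_left ht.1
    have h2 : max (t + 1/((m:ℝ)+1)) 0 = t + 1/((m:ℝ)+1) := max_eq_left (by linarith [ht.1])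
    have hm1 : t ∈ Icc (0:ℝ) (T+1) := ⟨ht.1, by linarith [ht.2]⟩
    have hm2 : t + 1/((m:ℝ)+1) ∈ Icc (0:ℝ) (T+1) := by
      constructor
      · linarith [ht.1]
      · have : 1/((m:ℝ)+1) ≤ 1 := by
          rw [div_le_one (by positivity)]; linarith [Nat.cast_nonneg (α := ℝ) m]
        linarith [ht.2]
    have hdist := hL.dist_le_mul _ hm2 _ hm1
    simp only [hDdef, hy₀def, h1, h2]
    rw [norm_smul]
    have hd : dist (t + 1/((m:ℝ)+1)) t = 1/((m:ℝ)+1) := by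
      rw [Real.dist_eq, add_sub_cancel_left, abs_of_pos h0]
    rw [hd] at hdist
    have : ‖y₀ (t + 1/((m:ℝ)+1)) - y₀ t‖ ≤ (L:ℝ) * (1/((m:ℝ)+1)) := by
      simp only [hy₀def, h1, h2]
      rw [← dist_eq_norm]; exact hdist
    calc ‖((m:ℝ)+1)‖ * ‖y (t + 1/((m:ℝ)+1)) - y t‖
        ≤ ((m:ℝ)+1) * ((L:ℝ) * (1/((m:ℝ)+1))) := by
          rw [Real.norm_eq_abs, abs_of_pos (by positivity)]
          refine mul_le_mul_of_nonneg_left ?_ (by positivity)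
          rw [← dist_eq_norm]; exact hdist
      _ = (L:ℝ) := by field_simp
  have hwz : ∀ t ∈ Icc (0:ℝ) T, ‖w t - z t‖ ≤ ‖y' t‖ := by
    intro t ht
    have hbody := hC t ht.1
    have h := (isProj_proj hbody (w t)).2 (y t) (hyC t ht.1)
    have h2 : ‖w t - y t‖ = ‖y' t‖ := by
      rw [show w t - y t = -(y' t) from by simp only [hwdef]; abel, norm_neg]
    exact le_trans h (le_of_eq h2)
  have A6 : ∀ᵐ t ∂μT, ‖z t - y t‖ ≤ 2 * (L:ℝ) := by
    filter_upwards [A1, A5] with t ht hy'le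
    have h1 := hwz t ht
    have e : z t - y t = -(w t - z t) + (w t - y t) := by simp only [hwdef]; abel
    rw [e]
    refine (norm_add_le _ _).trans ?_
    rw [norm_neg]
    have : ‖w t - y t‖ = ‖y' t‖ := by
      simp only [hwdef]
      rw [show y t - y' t - y t = -(y' t) by abel, norm_neg]
    rw [this]
    linarith [h1]
  set zt : ℝ → H := fun t => if ‖z t - y t‖ ≤ 2*(L:ℝ) + 1 then z t else y t with hztdef
  have A7 : ∀ᵐ t ∂μT, zt t = z t := by
    filter_upwards [A6] with t h6
    simp only [hztdef]
    rw [if_pos (by linarith)]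
  have hztm : AEStronglyMeasurable zt μT := hzm.congr (A7.mono fun t h => h.symm)
  have hztC : ∀ t ∈ Icc (0:ℝ) T, zt t ∈ C t := by
    intro t ht
    simp only [hztdef]
    split_ifs
    · exact proj_mem (hC t ht.1) (w t)
    · exact hyC t ht.1
  have hyb : ∀ t ∈ Icc (0:ℝ) T, ‖y t‖ ≤ ‖y 0‖ + (L:ℝ) * (T+1) := by
    intro t ht
    have h1 : t ∈ Icc (0:ℝ) (T+1) := ⟨ht.1, by linarith [ht.2]⟩
    have h2 : (0:ℝ) ∈ Icc (0:ℝ) (T+1) := ⟨le_rfl, by linarith⟩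
    have := hL.dist_le_mul _ h1 _ h2
    rw [dist_eq_norm] at this
    have hd : dist t 0 ≤ T + 1 := by
      rw [Real.dist_eq, sub_zero, abs_of_nonneg ht.1]; linarith [ht.2]
    have h3 : ‖y t‖ ≤ ‖y t - y 0‖ + ‖y 0‖ := by
      have h4 := norm_add_le (y t - y 0) (y 0)
      rwa [show (y t - y 0) + y 0 = y t from by abel] at h4
    have h5 : ‖y t - y 0‖ ≤ (L:ℝ) * (T+1) :=
      this.trans (mul_le_mul_of_nonneg_left hd L.2)
    linarith
  have hztb : ∃ M : ℝ, ∀ t ∈ Icc (0:ℝ) T, ‖zt t‖ ≤ M := by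
    refine ⟨‖y 0‖ + (L:ℝ) * (T+1) + (2*(L:ℝ) + 1), fun t ht => ?_⟩
    have hyt := hyb t ht
    simp only [hztdef]
    split_ifs with hcase
    · calc ‖z t‖ ≤ ‖z t - y t‖ + ‖y t‖ := by
            have e : z t = (z t - y t) + y t := by abel
            nth_rewrite 1 [e]; exact norm_add_le _ _
        _ ≤ (2*(L:ℝ) + 1) + (‖y 0‖ + (L:ℝ) * (T+1)) := add_le_add hcase hyt
        _ = _ := by ring
    · have : (0:ℝ) ≤ 2*(L:ℝ) + 1 := by positivity
      linarith
  have happ := hint T hT zt hztm hztb hztC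
  -- measurability and integrability of the integrands
  have hym : AEStronglyMeasurable y μT := by
    refine (hy₀.aestronglyMeasurable (μ := μT)).congr ?_
    filter_upwards [A1] with t ht
    simp only [hy₀def, max_eq_left ht.1]
  have hy'm : AEStronglyMeasurable y' μT :=
    aestronglyMeasurable_of_tendsto_ae atTop
      (fun m => (hDcont m).aestronglyMeasurable) A3
  set f : ℝ → ℝ := fun t => (inner ℝ (y t - zt t) (y' t) : ℝ) with hfdef
  set g : ℝ → ℝ := fun t => ‖y t - z t‖^2 with hgdef
  have hfm : AEStronglyMeasurable f μT := (hym.sub hztm).inner hy'm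
  have hgm : AEStronglyMeasurable g μT := by
    have : AEStronglyMeasurable (fun t => y t - z t) μT := hym.sub hzm
    exact (this.norm.aemeasurable.pow_const 2).aestronglyMeasurable
  have hfi : Integrable f μT := by
    refine Integrable.mono' (integrable_const ((2*(L:ℝ)) * (L:ℝ))) hfm ?_
    filter_upwards [A5, A6, A7] with t h5 h6 h7
    have : ‖f t‖ ≤ ‖y t - zt t‖ * ‖y' t‖ := by
      rw [Real.norm_eq_abs]; exact abs_real_inner_le_norm _ _
    refine this.trans ?_
    have h8 : ‖y t - zt t‖ ≤ 2*(L:ℝ) := by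
      rw [h7, ← norm_neg, neg_sub]; exact h6
    exact mul_le_mul h8 h5 (norm_nonneg _) (by positivity)
  have hgi : Integrable g μT := by
    refine Integrable.mono' (integrable_const ((2*(L:ℝ))^2)) hgm ?_
    filter_upwards [A6] with t h6
    have h8 : ‖y t - z t‖ ≤ 2*(L:ℝ) := by rw [← norm_neg, neg_sub]; exact h6
    rw [Real.norm_eq_abs, hgdef]
    simp only
    rw [abs_of_nonneg (by positivity)]
    exact pow_le_pow_left₀ (norm_nonneg _) h8 2
  have hgle : g ≤ᵐ[μT] f := by
    filter_upwards [A1, A7] with t ht h7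
    have hbody := hC t ht.1
    have hproj := proj_inner_le hbody (w t) (y t) (hyC t ht.1)
    -- f t = inner (y t - z t) (y t - w t) = ‖y-z‖² + inner (y-z) (z-w)
    have hy' : y' t = y t - w t := by simp only [hwdef]; abel
    have e : f t = (inner ℝ (y t - z t) (y t - w t) : ℝ) := by
      simp only [hfdef]; rw [h7, hy']
    have e2 : y t - w t = (y t - z t) + (z t - w t) := by abel
    rw [hgdef]
    simp only
    rw [e, e2, inner_add_right, real_inner_self_eq_norm_sq]
    have hproj' : (inner ℝ (w t - z t) (y t - z t) : ℝ) ≤ 0 := hproj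
    have heq9 : (inner ℝ (y t - z t) (z t - w t) : ℝ) = - inner ℝ (w t - z t) (y t - z t) := by
      rw [real_inner_comm]
      rw [← inner_neg_left, neg_sub]
    linarith [heq9, hproj']
  have hg0 : ∫ t, g t ∂μT = 0 := by
    refine le_antisymm ((integral_mono_ae hgi hfi hgle).trans happ) ?_
    exact integral_nonneg fun t => sq_nonneg _
  have hgz : g =ᵐ[μT] 0 :=
    (integral_eq_zero_iff_of_nonneg_ae (Eventually.of_forall fun t => sq_nonneg _) hgi).1 hg0
  filter_upwards [A1, hgz] with t ht hgt
  have hyz : y t = z t := by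
    simp only [Pi.zero_apply] at hgt
    have h0 : ‖y t - z t‖ ^ 2 = 0 := hgt
    have h2 : ‖y t - z t‖ = 0 := by
      nlinarith [norm_nonneg (y t - z t)]
    rw [← sub_eq_zero]
    exact norm_eq_zero.mp h2
  intro v hv
  have hbody := hC t ht.1
  have hproj' : (inner ℝ (w t - z t) (v - z t) : ℝ) ≤ 0 := proj_inner_le hbody (w t) v hv
  have hz_eq : z t = y t := hyz.symm
  rw [hz_eq] at hproj'
  have hw : w t - y t = -(y' t) := by simp only [hwdef]; abel
  rw [hw] at hproj'
  rw [real_inner_comm]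
  exact hproj'

end AuxProj

/-- Corollary 5.3 (integral formulation, Lipschitz case): for a moving set `C` which is
`1`-Lipschitz continuous with respect to the excess and a locally Lipschitz `y` with
`y(t) ∈ C(t)`, the differential inclusion `−y′(t) ∈ N_{C(t)}(y(t))` a.e. is equivalent to the
variational integral inequality tested on all bounded measurable selections `z` of `C`. -/
theorem integral_formulation_Lipschitz
    [CompleteSpace H]
    (C : ℝ → Set H) (hC : ∀ t : ℝ, 0 ≤ t → IsConvexBody (C t))
    (hLip : ∀ t s : ℝ, 0 ≤ t → t ≤ s → excess (C t) (C s) ≤ ENNReal.ofReal (s - t))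
    (y : ℝ → H) (hy : ∀ a b : ℝ, 0 ≤ a → ∃ L : ℝ≥0, LipschitzOnWith L y (Icc a b))
    (hyC : ∀ t : ℝ, 0 ≤ t → y t ∈ C t)
    (y' : ℝ → H)
    (hy' : ∀ᵐ t ∂(volume : Measure ℝ), 0 ≤ t → HasDerivWithinAt y (y' t) (Ici 0) t) :
    (∀ᵐ t ∂(volume : Measure ℝ), 0 ≤ t → -y' t ∈ normalCone (C t) (y t)) ↔
    (∀ T : ℝ, 0 < T → ∀ z : ℝ → H,
      AEStronglyMeasurable z (volume.restrict (Icc 0 T)) →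
      (∃ M : ℝ, ∀ t ∈ Icc (0:ℝ) T, ‖z t‖ ≤ M) →
      (∀ t ∈ Icc (0:ℝ) T, z t ∈ C t) →
      (∫ t in Icc (0:ℝ) T, (inner ℝ (y t - z t) (y' t) : ℝ)) ≤ 0) := by
  constructor
  · intro hmain T hT z hzm hzb hzC
    refine integral_nonpos_of_ae ?_
    filter_upwards [ae_restrict_mem measurableSet_Icc, ae_restrict_of_ae hmain] with t htI hcone
    have h := hcone htI.1 (z t) (hzC t htI)
    have e : (inner ℝ (z t - y t) (-y' t) : ℝ) = inner ℝ (y t - z t) (y' t) := by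
      rw [inner_neg_right, ← inner_neg_left, neg_sub]
    exact e ▸ h
  · intro hint
    have hTn : ∀ n : ℕ, ∀ᵐ t ∂(volume : Measure ℝ),
        t ∈ Icc (0:ℝ) ((n:ℝ)+1) → -y' t ∈ normalCone (C t) (y t) := by
      intro n
      have := key_T C hC hLip y hy hyC y' hy' hint (T := (n:ℝ)+1) (by positivity)
      exact (ae_restrict_iff' measurableSet_Icc).1 this
    filter_upwards [ae_all_iff.2 hTn] with t h ht0
    obtain ⟨n, hn⟩ := exists_nat_ge t
    exact h n ⟨ht0, by linarith⟩
end

section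
/- Let H be a real Hilbert space, let A, B ∈ Conv_H with ρ := e(A,B) < ∞, and define F : [0,1] → Conv_H by F(0) := A and F(t) := B + D_{(1−t)ρ} for 0 < t ≤ 1, where D_r := {x ∈ H : ‖x‖ ≤ r}. Then e(F(s),F(t)) = (t − s)·e(A,B) for all s, t ∈ [0,1] with s < t; in particular F is e-Lipschitz with constant e(A,B) and is a geodesic with respect to the excess connecting A to B. -/
open Filter Metric Set MeasureTheory Topology Function
open scoped ENNReal NNReal Pointwise InnerProductSpace

variable {H : Type*} [NormedAddCommGroup H] [InnerProductSpace ℝ H]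

/-- `B + D_r` is the closed `r`-thickening of `B`, for `B` a convex body. -/
lemma add_closedBall_eq_cthickening [CompleteSpace H] {B : Set H} (hB : IsConvexBody B)
    {r : ℝ} (hr : 0 ≤ r) :
    B + Metric.closedBall (0 : H) r = Metric.cthickening r B := by
  apply Set.Subset.antisymm
  · rintro x ⟨b, hb, v, hv, rfl⟩
    rw [Metric.mem_cthickening_iff]
    calc EMetric.infEdist (b + v) B ≤ edist (b + v) b := EMetric.infEdist_le_edist_of_mem hb
      _ = ENNReal.ofReal ‖v‖ := by
          rw [edist_dist]; congr 1; simp [dist_eq_norm]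
      _ ≤ ENNReal.ofReal r := by
          apply ENNReal.ofReal_le_ofReal
          simpa using mem_closedBall_iff_norm.mp hv
  · intro x hx
    obtain ⟨p, hp, hpeq⟩ := exists_norm_eq_iInf_of_complete_convex hB.1
      hB.2.1.isComplete hB.2.2 x
    have hdist : ‖x - p‖ = infDist x B := by
      rw [hpeq, infDist_eq_iInf]; simp_rw [dist_eq_norm]
    have hle : infDist x B ≤ r := by
      rw [Metric.mem_cthickening_iff] at hx
      have hne : EMetric.infEdist x B ≠ ⊤ := Metric.infEdist_ne_top hB.1
      rw [infDist]
      calc (EMetric.infEdist x B).toReal ≤ (ENNReal.ofReal r).toReal :=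
            ENNReal.toReal_mono ENNReal.ofReal_ne_top hx
        _ = r := ENNReal.toReal_ofReal hr
    exact ⟨p, hp, x - p, by simpa [mem_closedBall_iff_norm] using hdist.le.trans hle,
      by module⟩

/-- The excess over a closed thickening. -/
lemma excess_cthickening (A B : Set H) (r : ℝ) :
    excess A (Metric.cthickening r B) = excess A B - ENNReal.ofReal r := by
  simp only [excess, EMetric.infEdist, infEDist_cthickening]
  rw [ENNReal.iSup_sub]
  exact iSup_congr fun x => ENNReal.iSup_sub.symm

/-- The excess of the thickening of `B` over `B` equals `r`, provided some point lies at
positive distance from `B` (guaranteed by `0 < r ≤ ρ = e(A,B)`). -/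
lemma excess_cthickening_self [CompleteSpace H] {A B : Set H} (hB : IsConvexBody B)
    {ρ : ℝ} (hρ : excess A B = ENNReal.ofReal ρ) {r : ℝ} (hr : 0 ≤ r) (hrρ : r ≤ ρ) :
    excess (Metric.cthickening r B) B = ENNReal.ofReal r := by
  apply le_antisymm
  · exact iSup₂_le fun x hx => Metric.mem_cthickening_iff.mp hx
  · rcases hr.eq_or_lt with rfl | hr'
    · simp
    -- there is a point of `A` at positive distance from `B`
    obtain ⟨x₀, hx₀A, hx₀⟩ : ∃ x₀ ∈ A, 0 < EMetric.infEdist x₀ B := by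
      by_contra hcon
      push_neg at hcon
      have : excess A B ≤ 0 := iSup₂_le fun x hx => hcon x hx
      rw [hρ] at this
      simp only [nonpos_iff_eq_zero, ENNReal.ofReal_eq_zero] at this
      linarith
    obtain ⟨p, hp, hpeq⟩ := exists_norm_eq_iInf_of_complete_convex hB.1
      hB.2.1.isComplete hB.2.2 x₀
    have hproj : ∀ w ∈ B, ⟪x₀ - p, w - p⟫_ℝ ≤ 0 :=
      (norm_eq_iInf_iff_real_inner_le_zero hB.2.2 hp).mp hpeq
    have hxp : x₀ ≠ p := by
      rintro rfl
      exact absurd (EMetric.infEdist_zero_of_mem hp) hx₀.ne'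
    have hnorm : 0 < ‖x₀ - p‖ := by
      simpa [sub_eq_zero] using hxp
    set u : H := ‖x₀ - p‖⁻¹ • (x₀ - p) with hu
    have hu1 : ‖u‖ = 1 := by
      rw [hu, norm_smul, norm_inv, norm_norm, inv_mul_cancel₀ hnorm.ne']
    set q : H := p + r • u with hq
    have hqmem : q ∈ Metric.cthickening r B := by
      rw [Metric.mem_cthickening_iff]
      calc EMetric.infEdist q B ≤ edist q p := EMetric.infEdist_le_edist_of_mem hp
        _ = ENNReal.ofReal ‖r • u‖ := by rw [edist_dist]; congr 1; simp [hq, dist_eq_norm]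
        _ = ENNReal.ofReal r := by rw [norm_smul, hu1, Real.norm_eq_abs, abs_of_nonneg hr]; ring_nf
    have hfar : ENNReal.ofReal r ≤ EMetric.infEdist q B := by
      rw [EMetric.infEdist, le_infEDist]
      intro b hb
      rw [edist_dist, dist_eq_norm]
      apply ENNReal.ofReal_le_ofReal
      have h1 : ⟪q - b, u⟫_ℝ ≤ ‖q - b‖ := by
        calc ⟪q - b, u⟫_ℝ ≤ ‖q - b‖ * ‖u‖ := real_inner_le_norm _ _
          _ = ‖q - b‖ := by rw [hu1, mul_one]
      have h2 : ⟪p - b, u⟫_ℝ ≥ 0 := by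
        have := hproj b hb
        have heq : ⟪p - b, u⟫_ℝ = ‖x₀ - p‖⁻¹ * ⟪x₀ - p, p - b⟫_ℝ := by
          rw [hu, real_inner_smul_right, real_inner_comm]
        rw [heq]
        have : ⟪x₀ - p, p - b⟫_ℝ = -⟪x₀ - p, b - p⟫_ℝ := by
          rw [← inner_neg_right]; congr 1; abel
        rw [this]
        apply mul_nonneg (inv_nonneg.mpr hnorm.le)
        linarith [hproj b hb]
      have h3 : ⟪q - b, u⟫_ℝ = ⟪p - b, u⟫_ℝ + r := by
        have : q - b = (p - b) + r • u := by rw [hq]; abel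
        rw [this, inner_add_left, real_inner_smul_left, real_inner_self_eq_norm_sq, hu1]
        ring
      linarith
    calc ENNReal.ofReal r ≤ EMetric.infEdist q B := hfar
      _ ≤ ⨆ x ∈ Metric.cthickening r B, EMetric.infEdist x B := le_iSup₂_of_le q hqmem le_rfl

/-- Proposition 6.2: the curve `F(0) = A`, `F(t) = B + D_{(1−t)ρ}` for `0 < t ≤ 1`
(`ρ = e(A,B)`) satisfies `e(F(s),F(t)) = (t − s)·e(A,B)` for `s < t` in `[0,1]`; in
particular it is a geodesic for the excess connecting `A` to `B`. -/
theorem excess_geodesic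
    [CompleteSpace H]
    (A B : Set H) (hA : IsConvexBody A) (hB : IsConvexBody B)
    (ρ : ℝ) (hρ0 : 0 ≤ ρ) (hρ : excess A B = ENNReal.ofReal ρ)
    (F : ℝ → Set H) (hF0 : F 0 = A)
    (hF : ∀ t : ℝ, 0 < t → t ≤ 1 → F t = B + Metric.closedBall (0 : H) ((1 - t) * ρ)) :
    ∀ s t : ℝ, 0 ≤ s → s < t → t ≤ 1 →
      excess (F s) (F t) = ENNReal.ofReal ((t - s) * ρ) := by
  intro s t hs hst ht1
  have ht0 : 0 < t := lt_of_le_of_lt hs hst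
  have hr2 : (0 : ℝ) ≤ (1 - t) * ρ := mul_nonneg (by linarith) hρ0
  have hFt : F t = Metric.cthickening ((1 - t) * ρ) B := by
    rw [hF t ht0 ht1, add_closedBall_eq_cthickening hB hr2]
  rcases hs.eq_or_lt with rfl | hs'
  · -- s = 0
    rw [hF0, hFt, excess_cthickening, hρ, ← ENNReal.ofReal_sub _ hr2]
    congr 1
    ring
  · -- 0 < s
    have hr1 : (0 : ℝ) ≤ (1 - s) * ρ := mul_nonneg (by linarith) hρ0
    have hr1ρ : (1 - s) * ρ ≤ ρ := by nlinarith
    rw [hF s hs' (by linarith), add_closedBall_eq_cthickening hB hr1, hFt,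
      excess_cthickening, excess_cthickening_self hB hρ hr1 hr1ρ,
      ← ENNReal.ofReal_sub _ hr2]
    congr 1
    ring
end

section
/- Let H be a real Hilbert space, let A, B ∈ Conv_H with ρ := e(A,B) < ∞, and define F : [0,1] → Conv_H by F(0) := A and F(t) := B + D_{(1−t)ρ} for 0 < t ≤ 1. Let y₀ ∈ A, let t₀ ∈ [0,1] satisfy ‖y₀ − Proj_B(y₀)‖ = (1 − t₀)ρ, and define y : [0,1] → H by y(t) := y₀ for t ∈ [0,t₀), y(t) := y₀ + ((t − t₀)/(1 − t₀))(Proj_B(y₀) − y₀) for t ∈ [t₀,1) when t₀ ≠ 1, and y(1) := Proj_B(y₀). Then y is Lipschitz continuous on [0,1] and satisfies: y(t) ∈ F(t) for all t ∈ [0,1]; −y′(t) ∈ N_{F(t)}(y(t)) for Lebesgue-a.e. t ∈ [0,1]; and y(0) = Proj_{F(0)}(y₀) = y₀. That is, y is the unique solution of the sweeping process driven by F with initial condition y₀. -/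
open Filter Metric Set MeasureTheory Topology Function
open scoped ENNReal NNReal Pointwise

variable {H : Type*} [NormedAddCommGroup H] [InnerProductSpace ℝ H]

lemma antitone_of_lipschitz_of_ae_deriv_nonpos {g : ℝ → ℝ} {K : ℝ≥0}
    (hg : LipschitzWith K g)
    (h : ∀ᵐ t ∂(volume : Measure ℝ), ∃ d : ℝ, d ≤ 0 ∧ HasDerivAt g d t) :
    Antitone g := by
  set f : StieltjesFunction ℝ :=
    { toFun := fun t => K * t - g t
      mono' := by
        intro s t hst
        have h1 := hg.dist_le_mul t s
        rw [Real.dist_eq, Real.dist_eq] at h1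
        have h2 : g t - g s ≤ K * (t - s) := by
          have := le_trans (le_abs_self _) h1
          rwa [abs_of_nonneg (by linarith)] at this
        dsimp only
        linarith
      right_continuous' := fun x =>
        ((continuous_const.mul continuous_id).sub hg.continuous).continuousWithinAt } with hfdef
  have hfx : ∀ x, f x = K * x - g x := fun _ => rfl
  have hμ : ∀ᵐ x ∂(volume : Measure ℝ),
      ENNReal.ofReal (K : ℝ) ≤ f.measure.rnDeriv volume x := by
    filter_upwards [f.ae_hasDerivAt, h, Measure.rnDeriv_lt_top f.measure volume] with x hx hd hlt
    obtain ⟨d, hd0, hgd⟩ := hd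
    have hfd : HasDerivAt (fun t => (K : ℝ) * t - g t) ((K : ℝ) - d) x := by
      exact (((hasDerivAt_id' x).const_mul (K : ℝ)).sub hgd).congr_deriv (by simp)
    have huniq : (f.measure.rnDeriv volume x).toReal = (K : ℝ) - d := hx.unique hfd
    calc ENNReal.ofReal (K : ℝ) ≤ ENNReal.ofReal ((K : ℝ) - d) :=
          ENNReal.ofReal_le_ofReal (by linarith)
      _ = f.measure.rnDeriv volume x := by
          rw [← huniq, ENNReal.ofReal_toReal hlt.ne]
  intro a b hab
  have h1 : ENNReal.ofReal ((K : ℝ) * (b - a)) ≤ f.measure (Ioc a b) := by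
    calc ENNReal.ofReal ((K : ℝ) * (b - a))
        = ENNReal.ofReal (K : ℝ) * volume (Ioc a b) := by
          rw [Real.volume_Ioc]; exact ENNReal.ofReal_mul K.2
      _ = ∫⁻ _ in Ioc a b, ENNReal.ofReal (K : ℝ) ∂volume := (setLIntegral_const _ _).symm
      _ ≤ ∫⁻ x in Ioc a b, f.measure.rnDeriv volume x ∂volume :=
          lintegral_mono_ae (ae_restrict_of_ae hμ)
      _ = (volume.withDensity (f.measure.rnDeriv volume)) (Ioc a b) :=
          (withDensity_apply _ measurableSet_Ioc).symm
      _ ≤ f.measure (Ioc a b) := Measure.withDensity_rnDeriv_le _ _ _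
  rw [f.measure_Ioc] at h1
  have h2 : (K : ℝ) * (b - a) ≤ f b - f a := by
    have hfab : f a ≤ f b := f.mono hab
    exact (ENNReal.ofReal_le_ofReal_iff (by linarith)).mp h1
  rw [hfx a, hfx b] at h2
  linarith

lemma isProj_inner_le {B : Set H} (hB : Convex ℝ B) {y₀ p : H}
    (hp : IsProj B y₀ p) {b : H} (hb : b ∈ B) : (inner ℝ (b - p) (y₀ - p) : ℝ) ≤ 0 := by
  have : Nonempty B := ⟨⟨p, hp.1⟩⟩
  have key : ‖y₀ - p‖ = ⨅ w : B, ‖y₀ - (w : H)‖ := by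
    refine le_antisymm (le_ciInf fun w => hp.2 w w.2) ?_
    have hbdd : BddBelow (Set.range fun w : B => ‖y₀ - (w : H)‖) :=
      ⟨0, by rintro x ⟨w, rfl⟩; exact norm_nonneg _⟩
    exact ciInf_le hbdd ⟨p, hp.1⟩
  have h := (norm_eq_iInf_iff_real_inner_le_zero hB hp.1).mp key b hb
  calc (inner ℝ (b - p) (y₀ - p) : ℝ) = inner ℝ (y₀ - p) (b - p) := real_inner_comm _ _
    _ ≤ 0 := h

/-- Lemma 6.3: the solution of the sweeping process driven by the geodesic
`F(0) = A`, `F(t) = B + D_{(1−t)ρ}` (`ρ = e(A,B)`) with initial datum `y₀ ∈ A` is the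
straight line segment which is constant equal to `y₀` until the time `t₀` determined by
`‖y₀ − Proj_B(y₀)‖ = (1 − t₀)ρ`, and then moves affinely to `Proj_B(y₀)`; moreover it is the
unique solution. -/
theorem sweeping_process_of_excess_geodesic
    [CompleteSpace H]
    (A B : Set H) (hA : IsConvexBody A) (hB : IsConvexBody B)
    (ρ : ℝ) (hρ0 : 0 ≤ ρ) (hρ : excess A B = ENNReal.ofReal ρ)
    (F : ℝ → Set H) (hF0 : F 0 = A)
    (hF : ∀ t : ℝ, 0 < t → t ≤ 1 → F t = B + Metric.closedBall (0 : H) ((1 - t) * ρ))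
    (y₀ : H) (hy₀ : y₀ ∈ A)
    (p : H) (hp : IsProj B y₀ p)
    (t₀ : ℝ) (ht₀ : t₀ ∈ Icc (0:ℝ) 1) (ht₀' : ‖y₀ - p‖ = (1 - t₀) * ρ)
    (y : ℝ → H)
    (hy1 : ∀ t : ℝ, 0 ≤ t → t < t₀ → y t = y₀)
    (hy2 : t₀ ≠ 1 → ∀ t : ℝ, t₀ ≤ t → t < 1 → y t = y₀ + ((t - t₀) / (1 - t₀)) • (p - y₀))
    (hy3 : y 1 = p) :
    (∃ L : ℝ≥0, LipschitzOnWith L y (Icc 0 1)) ∧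
    (∀ t ∈ Icc (0:ℝ) 1, y t ∈ F t) ∧
    (∀ᵐ t ∂(volume : Measure ℝ), t ∈ Icc (0:ℝ) 1 →
      ∃ d : H, HasDerivWithinAt y d (Icc 0 1) t ∧ -d ∈ normalCone (F t) (y t)) ∧
    (y 0 = y₀ ∧ IsProj (F 0) y₀ (y 0)) ∧
    (∀ w : ℝ → H, (∃ L : ℝ≥0, LipschitzOnWith L w (Icc 0 1)) →
      (∀ t ∈ Icc (0:ℝ) 1, w t ∈ F t) →
      (∀ᵐ t ∂(volume : Measure ℝ), t ∈ Icc (0:ℝ) 1 →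
        ∃ d : H, HasDerivWithinAt w d (Icc 0 1) t ∧ -d ∈ normalCone (F t) (w t)) →
      w 0 = y₀ → EqOn w y (Icc 0 1)) := by
  obtain ⟨ht₀0, ht₀1⟩ := ht₀
  have hpy : t₀ = 1 → p = y₀ := by
    intro h
    have h0 : ‖y₀ - p‖ = 0 := by rw [ht₀', h]; ring
    have := norm_eq_zero.mp h0
    rw [sub_eq_zero] at this
    exact this.symm
  have hy0 : y 0 = y₀ := by
    rcases eq_or_lt_of_le ht₀0 with h | h
    · have h01 : t₀ ≠ 1 := by rw [← h]; norm_num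
      rw [hy2 h01 0 h.ge zero_lt_one, ← h]
      norm_num
    · exact hy1 0 le_rfl h
  have hrep : ∀ t ∈ Icc (0:ℝ) 1, y t = y₀ + ((max t t₀ - t₀) / (1 - t₀)) • (p - y₀) := by
    rintro t ⟨h0t, ht1⟩
    by_cases h1 : t₀ = 1
    · rw [hpy h1, sub_self, smul_zero, add_zero]
      rcases lt_or_eq_of_le ht1 with h | h
      · exact hy1 t h0t (h1 ▸ h)
      · rw [h, hy3, hpy h1]
    · have h1' : t₀ < 1 := lt_of_le_of_ne ht₀1 h1
      by_cases ht : t < t₀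
      · rw [hy1 t h0t ht, max_eq_right ht.le, sub_self, zero_div, zero_smul, add_zero]
      · push_neg at ht
        rw [max_eq_left ht]
        rcases lt_or_eq_of_le ht1 with h | h
        · exact hy2 h1 t ht h
        · rw [h, hy3, div_self (by linarith : (1:ℝ) - t₀ ≠ 0), one_smul]
          abel
  have hnq : ‖p - y₀‖ = (1 - t₀) * ρ := by rw [norm_sub_rev]; exact ht₀'
  -- Part 1 : Lipschitz
  have hlip : LipschitzOnWith ρ.toNNReal y (Icc 0 1) := by
    have hL : ((ρ.toNNReal : ℝ≥0) : ℝ) = ρ := Real.coe_toNNReal ρ hρ0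
    rw [lipschitzOnWith_iff_dist_le_mul]
    intro s hs t ht
    rw [dist_eq_norm, hrep s hs, hrep t ht, hL]
    have heq : y₀ + ((max s t₀ - t₀) / (1 - t₀)) • (p - y₀) -
        (y₀ + ((max t t₀ - t₀) / (1 - t₀)) • (p - y₀)) =
        ((max s t₀ - max t t₀) / (1 - t₀)) • (p - y₀) := by
      have hd : (max s t₀ - max t t₀) / (1 - t₀) =
          (max s t₀ - t₀) / (1 - t₀) - (max t t₀ - t₀) / (1 - t₀) := by
        rw [div_sub_div_same]; ring_nf
      rw [hd]; module
    rw [heq, norm_smul, hnq, Real.norm_eq_abs]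
    by_cases h1 : t₀ = 1
    · rw [h1]
      norm_num
      positivity
    · have h1' : t₀ < 1 := lt_of_le_of_ne ht₀1 h1
      have habs : |(max s t₀ - max t t₀) / (1 - t₀)| * ((1 - t₀) * ρ)
          = |max s t₀ - max t t₀| * ρ := by
        have hne : (1:ℝ) - t₀ ≠ 0 := by linarith
        rw [abs_div, abs_of_pos (by linarith : (0:ℝ) < 1 - t₀), div_mul_eq_mul_div,
          mul_comm (1 - t₀) ρ, ← mul_assoc, mul_div_assoc, div_self hne, mul_one]
      rw [habs, Real.dist_eq]
      have := abs_max_sub_max_le_abs s t t₀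
      nlinarith [abs_nonneg (s - t), hρ0]
  -- Part 2 : membership
  have hmem : ∀ t ∈ Icc (0:ℝ) 1, y t ∈ F t := by
    rintro t ⟨h0t, ht1⟩
    rcases eq_or_lt_of_le h0t with h | h
    · rw [← h, hy0, hF0]
      exact hy₀
    · rw [hF t h ht1, hrep t ⟨h0t, ht1⟩]
      set lam : ℝ := (max t t₀ - t₀) / (1 - t₀) with hlam
      have hval : y₀ + lam • (p - y₀) - p = (1 - lam) • (y₀ - p) := by module
      have hnorm : ‖y₀ + lam • (p - y₀) - p‖ ≤ (1 - t) * ρ := by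
        rw [hval, norm_smul, ht₀', Real.norm_eq_abs]
        by_cases h1 : t₀ = 1
        · have hz : (1 - t₀) * ρ = 0 := by rw [h1]; ring
          rw [hz, mul_zero]
          nlinarith
        · have h1' : t₀ < 1 := lt_of_le_of_ne ht₀1 h1
          have hmax1 : max t t₀ ≤ 1 := max_le ht1 ht₀1
          have hmaxt : t ≤ max t t₀ := le_max_left _ _
          have hne : (1:ℝ) - t₀ ≠ 0 := by linarith
          have h1l : 1 - lam = (1 - max t t₀) / (1 - t₀) := by
            rw [hlam, one_sub_div hne]
            ring_nf
          rw [h1l, abs_div, abs_of_nonneg (by linarith : (0:ℝ) ≤ 1 - max t t₀),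
            abs_of_pos (by linarith : (0:ℝ) < 1 - t₀)]
          have hsimp : (1 - max t t₀) / (1 - t₀) * ((1 - t₀) * ρ) = (1 - max t t₀) * ρ := by
            rw [div_mul_eq_mul_div, mul_comm (1 - t₀) ρ, ← mul_assoc, mul_div_assoc,
              div_self hne, mul_one]
          rw [hsimp]
          nlinarith
      exact Set.mem_add.mpr ⟨p, hp.1, y₀ + lam • (p - y₀) - p,
        mem_closedBall_zero_iff.mpr hnorm, by abel⟩
  -- Part 3 core : pointwise derivative away from {0, 1, t₀}
  have hzero_mem : ∀ (K : Set H) (x : H), (0 : H) ∈ normalCone K x := by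
    intro K x v hv
    simp
  have hderiv : ∀ t ∈ Ioo (0:ℝ) 1, t ≠ t₀ →
      ∃ d : H, HasDerivAt y d t ∧ -d ∈ normalCone (F t) (y t) := by
    rintro t ⟨h0t, ht1⟩ htne
    rcases lt_or_gt_of_ne htne with hlt | hgt
    · refine ⟨0, ?_, by simpa using hzero_mem (F t) (y t)⟩
      have hmemn : Ioo (0:ℝ) t₀ ∈ 𝓝 t := isOpen_Ioo.mem_nhds ⟨h0t, hlt⟩
      exact (hasDerivAt_const t y₀).congr_of_eventuallyEq
        (eventually_of_mem hmemn fun s hs => hy1 s hs.1.le hs.2)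
    · have h1' : t₀ < 1 := lt_trans hgt ht1
      have hne : (1:ℝ) - t₀ ≠ 0 := by linarith
      have ht₀ne : t₀ ≠ 1 := by linarith
      refine ⟨(1 / (1 - t₀)) • (p - y₀), ?_, ?_⟩
      · have hmemn : Ioo t₀ 1 ∈ 𝓝 t := isOpen_Ioo.mem_nhds ⟨hgt, ht1⟩
        have hD : HasDerivAt (fun s : ℝ => y₀ + ((s - t₀) / (1 - t₀)) • (p - y₀))
            ((1 / (1 - t₀)) • (p - y₀)) t := by
          have hsc : HasDerivAt (fun s : ℝ => (s - t₀) / (1 - t₀)) (1 / (1 - t₀)) t := by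
            simpa using ((hasDerivAt_id t).sub_const t₀).div_const (1 - t₀)
          exact (hsc.smul_const (p - y₀)).const_add y₀
        exact hD.congr_of_eventuallyEq
          (eventually_of_mem hmemn fun s hs => hy2 ht₀ne s hs.1.le hs.2)
      · intro v hv
        rw [hF t h0t ht1.le] at hv
        obtain ⟨b, hb, u, hu, rfl⟩ := Set.mem_add.mp hv
        have hyt : y t = y₀ + ((t - t₀) / (1 - t₀)) • (p - y₀) := hy2 ht₀ne t hgt.le ht1
        have hneg : -((1 / (1 - t₀)) • (p - y₀)) = (1 / (1 - t₀)) • (y₀ - p) := by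
          rw [← smul_neg, neg_sub]
        rw [hneg, real_inner_smul_right]
        have hfac : (0:ℝ) ≤ 1 / (1 - t₀) := le_of_lt (div_pos one_pos (by linarith))
        have hkey : (inner ℝ (b + u - y t) (y₀ - p) : ℝ) ≤ 0 := by
          have hdecomp : b + u - y t =
              (b - p) + u + ((1 - (t - t₀) / (1 - t₀)) • (p - y₀)) := by
            rw [hyt]; module
          rw [hdecomp, inner_add_left, inner_add_left]
          have h1 : (inner ℝ (b - p) (y₀ - p) : ℝ) ≤ 0 := isProj_inner_le hB.2.2 hp hb
          have hnn : (0:ℝ) ≤ (1 - t₀) * ρ := ht₀' ▸ norm_nonneg _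
          have h2 : (inner ℝ u (y₀ - p) : ℝ) ≤ (1 - t) * ρ * ((1 - t₀) * ρ) := by
            have hle := real_inner_le_norm u (y₀ - p)
            have hu' : ‖u‖ ≤ (1 - t) * ρ := mem_closedBall_zero_iff.mp hu
            have h2' : ‖u‖ * ‖y₀ - p‖ ≤ (1 - t) * ρ * ((1 - t₀) * ρ) := by
              rw [ht₀']
              exact mul_le_mul_of_nonneg_right hu' hnn
            linarith
          have h3 : (inner ℝ ((1 - (t - t₀) / (1 - t₀)) • (p - y₀)) (y₀ - p) : ℝ)
              = -((1 - t) * ρ * ((1 - t₀) * ρ)) := by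
            rw [real_inner_smul_left, ← neg_sub y₀ p, inner_neg_left,
              real_inner_self_eq_norm_sq, ht₀', one_sub_div hne]
            field_simp
            ring
          linarith
        exact mul_nonpos_iff.mpr (Or.inl ⟨hfac, hkey⟩)
  have hae01 : ∀ᵐ t ∂(volume : Measure ℝ), t ∉ ({0, 1, t₀} : Set ℝ) := by
    have hz : volume ({0, 1, t₀} : Set ℝ) = 0 :=
      (Set.toFinite _).measure_zero volume
    exact measure_eq_zero_iff_ae_notMem.mp hz
  have part3 : ∀ᵐ t ∂(volume : Measure ℝ), t ∈ Icc (0:ℝ) 1 →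
      ∃ d : H, HasDerivWithinAt y d (Icc 0 1) t ∧ -d ∈ normalCone (F t) (y t) := by
    filter_upwards [hae01] with t htne hticc
    simp only [Set.mem_insert_iff, Set.mem_singleton_iff, not_or] at htne
    obtain ⟨hne0, hne1, hnet₀⟩ := htne
    have ht' : t ∈ Ioo (0:ℝ) 1 :=
      ⟨lt_of_le_of_ne hticc.1 (Ne.symm hne0), lt_of_le_of_ne hticc.2 hne1⟩
    obtain ⟨d, hd, hdc⟩ := hderiv t ht' hnet₀
    exact ⟨d, hd.hasDerivWithinAt, hdc⟩
  refine ⟨⟨ρ.toNNReal, hlip⟩, hmem, part3, ⟨hy0, ?_⟩, ?_⟩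
  · rw [hy0, hF0]
    exact ⟨hy₀, fun v _ => by simp⟩
  -- uniqueness
  rintro w ⟨Lw, hLw⟩ hwmem hwae hw0
  set π : ℝ → ℝ := fun s => max (min s 1) 0 with hπdef
  have hπmem : ∀ s, π s ∈ Icc (0:ℝ) 1 := fun s =>
    ⟨le_max_right _ _, max_le (min_le_right s 1) zero_le_one⟩
  have hπid : ∀ s ∈ Icc (0:ℝ) 1, π s = s := by
    rintro s ⟨h0, h1⟩
    rw [hπdef]
    dsimp only
    rw [min_eq_left h1, max_eq_left h0]
  have hπlip : ∀ s t : ℝ, |π s - π t| ≤ |s - t| := by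
    intro s t
    calc |π s - π t| ≤ |min s 1 - min t 1| := by
          simpa using abs_max_sub_max_le_abs (min s 1) (min t 1) 0
      _ ≤ max |s - t| |(1:ℝ) - 1| := abs_min_sub_min_le_max s 1 t 1
      _ = |s - t| := by simp
  set u : ℝ → H := fun s => w (π s) - y (π s) with hudef
  have hueq : ∀ s : ℝ, u s = w (π s) - y (π s) := fun _ => rfl
  have hu0 : u 0 = 0 := by
    rw [hueq, hπid 0 ⟨le_rfl, zero_le_one⟩, hw0, hy0]
    simp
  set C : ℝ := (Lw : ℝ) + ρ with hCdef
  have hC0 : 0 ≤ C := by positivity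
  have hu_dist : ∀ s t : ℝ, dist (u s) (u t) ≤ C * |π s - π t| := by
    intro s t
    have hw' := lipschitzOnWith_iff_dist_le_mul.mp hLw (π s) (hπmem s) (π t) (hπmem t)
    have hy' := lipschitzOnWith_iff_dist_le_mul.mp hlip (π s) (hπmem s) (π t) (hπmem t)
    have hL : ((ρ.toNNReal : ℝ≥0) : ℝ) = ρ := Real.coe_toNNReal ρ hρ0
    rw [hL] at hy'
    calc dist (u s) (u t) ≤ dist (w (π s)) (w (π t)) + dist (y (π s)) (y (π t)) :=
          dist_sub_sub_le _ _ _ _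
      _ ≤ (Lw : ℝ) * dist (π s) (π t) + ρ * dist (π s) (π t) := add_le_add hw' hy'
      _ = C * |π s - π t| := by rw [Real.dist_eq]; ring
  have hu_lip : ∀ s t : ℝ, dist (u s) (u t) ≤ C * dist s t := by
    intro s t
    refine le_trans (hu_dist s t) ?_
    rw [Real.dist_eq]
    exact mul_le_mul_of_nonneg_left (hπlip s t) hC0
  have hu_bdd : ∀ s : ℝ, ‖u s‖ ≤ C := by
    intro s
    have h1 : ‖u s‖ = dist (u s) (u 0) := by rw [hu0, dist_zero_right]
    have h2 : |π s - π 0| ≤ 1 := by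
      have hs := hπmem s
      have h0 := hπmem 0
      rw [abs_le]
      exact ⟨by linarith [hs.1, h0.2], by linarith [hs.2, h0.1]⟩
    calc ‖u s‖ = dist (u s) (u 0) := h1
      _ ≤ C * |π s - π 0| := hu_dist s 0
      _ ≤ C * 1 := mul_le_mul_of_nonneg_left h2 hC0
      _ = C := mul_one C
  set g : ℝ → ℝ := fun s => (inner ℝ (u s) (u s) : ℝ) with hgdef
  have hgeq : ∀ s : ℝ, g s = (inner ℝ (u s) (u s) : ℝ) := fun _ => rfl
  have inner_diff : ∀ a b : H, (inner ℝ a a : ℝ) - inner ℝ b b = inner ℝ (a - b) (a + b) := by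
    intro a b
    rw [inner_sub_left, inner_add_right, inner_add_right]
    have := real_inner_comm a b
    linarith
  have hg_lip : LipschitzWith (2 * C * C).toNNReal g := by
    apply LipschitzWith.of_dist_le'
    intro s t
    have hgs : g s - g t = inner ℝ (u s - u t) (u s + u t) := inner_diff (u s) (u t)
    rw [Real.dist_eq, hgs]
    calc |(inner ℝ (u s - u t) (u s + u t) : ℝ)| ≤ ‖u s - u t‖ * ‖u s + u t‖ :=
          abs_real_inner_le_norm _ _
      _ ≤ (C * dist s t) * (2 * C) := by
          have h1 : ‖u s - u t‖ ≤ C * dist s t := by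
            rw [← dist_eq_norm]; exact hu_lip s t
          have h2 : ‖u s + u t‖ ≤ 2 * C := by
            calc ‖u s + u t‖ ≤ ‖u s‖ + ‖u t‖ := norm_add_le _ _
              _ ≤ 2 * C := by linarith [hu_bdd s, hu_bdd t]
          have := dist_nonneg (x := s) (y := t)
          exact mul_le_mul h1 h2 (norm_nonneg _) (by positivity)
      _ = 2 * C * C * dist s t := by ring
  have hg_ae : ∀ᵐ t ∂(volume : Measure ℝ), ∃ d : ℝ, d ≤ 0 ∧ HasDerivAt g d t := by
    filter_upwards [hwae, hae01] with t hw htne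
    simp only [Set.mem_insert_iff, Set.mem_singleton_iff, not_or] at htne
    obtain ⟨hne0, hne1, hnet₀⟩ := htne
    rcases lt_trichotomy t 0 with h | h | h
    · refine ⟨0, le_rfl, ?_⟩
      have hmemn : Iio (0:ℝ) ∈ 𝓝 t := isOpen_Iio.mem_nhds h
      refine (hasDerivAt_const t (0:ℝ)).congr_of_eventuallyEq
        (eventually_of_mem hmemn fun s hs => ?_)
      have hπs : π s = 0 := by
        rw [hπdef]
        dsimp only
        rw [min_eq_left (by linarith [Set.mem_Iio.mp hs] : s ≤ 1),
          max_eq_right (le_of_lt (Set.mem_Iio.mp hs))]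
      rw [hgeq, hueq, hπs, hw0, hy0]
      simp
    · exact absurd h hne0
    · rcases lt_trichotomy t 1 with h1 | h1 | h1
      · -- main case
        obtain ⟨dw, hdw, hcw⟩ := hw ⟨h.le, h1.le⟩
        have hIcc : Icc (0:ℝ) 1 ∈ 𝓝 t := Icc_mem_nhds h h1
        have hdw' : HasDerivAt w dw t := hdw.hasDerivAt hIcc
        obtain ⟨dy, hdy, hcy⟩ := hderiv t ⟨h, h1⟩ hnet₀
        have huD : HasDerivAt u (dw - dy) t := by
          refine (hdw'.sub hdy).congr_of_eventuallyEq ?_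
          filter_upwards [isOpen_Ioo.mem_nhds (⟨h, h1⟩ : t ∈ Ioo (0:ℝ) 1)] with s hs
          rw [hueq, hπid s ⟨hs.1.le, hs.2.le⟩]
          rfl
        have hgD : HasDerivAt g ((inner ℝ (u t) (dw - dy) : ℝ) + inner ℝ (dw - dy) (u t)) t :=
          huD.inner ℝ huD
        refine ⟨_, ?_, hgD⟩
        have hut : u t = w t - y t := by
          rw [hueq, hπid t ⟨h.le, h1.le⟩]
        have hcw' := hcw (y t) (hmem t ⟨h.le, h1.le⟩)
        have hcy' := hcy (w t) (hwmem t ⟨h.le, h1.le⟩)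
        have e1 : (inner ℝ (y t - w t) (-dw) : ℝ) = (inner ℝ (w t - y t) dw : ℝ) := by
          rw [← neg_sub (w t) (y t), inner_neg_left, inner_neg_right, neg_neg]
        have e2 : (inner ℝ (w t - y t) (-dy) : ℝ) = -(inner ℝ (w t - y t) dy : ℝ) :=
          inner_neg_right _ _
        rw [e1] at hcw'
        rw [e2] at hcy'
        have hsum : (inner ℝ (w t - y t) (dw - dy) : ℝ) ≤ 0 := by
          rw [inner_sub_right]
          linarith
        have hcomm : (inner ℝ (dw - dy) (u t) : ℝ) = inner ℝ (u t) (dw - dy) :=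
          real_inner_comm _ _
        rw [hcomm, hut]
        have : (inner ℝ (w t - y t) (dw - dy) : ℝ) + inner ℝ (w t - y t) (dw - dy) ≤ 0 := by
          linarith
        linarith [hsum]
      · exact absurd h1 hne1
      · refine ⟨0, le_rfl, ?_⟩
        have hmemn : Ioi (1:ℝ) ∈ 𝓝 t := isOpen_Ioi.mem_nhds h1
        refine (hasDerivAt_const t ((inner ℝ (w 1 - y 1) (w 1 - y 1) : ℝ))).congr_of_eventuallyEq
          (eventually_of_mem hmemn fun s hs => ?_)
        have hπs : π s = 1 := by
          rw [hπdef]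
          dsimp only
          rw [min_eq_right (le_of_lt (Set.mem_Ioi.mp hs)), max_eq_left zero_le_one]
        rw [hgeq, hueq, hπs]
  have hg_anti : Antitone g := antitone_of_lipschitz_of_ae_deriv_nonpos hg_lip hg_ae
  intro t ht
  have hg0 : g 0 = 0 := by
    rw [hgeq, hu0]
    simp
  have hgt0 : g t ≤ 0 := hg0 ▸ hg_anti ht.1
  have hgtnn : 0 ≤ g t := real_inner_self_nonneg
  have : (inner ℝ (u t) (u t) : ℝ) = 0 := le_antisymm hgt0 hgtnn
  have hut0 : u t = 0 := inner_self_eq_zero.mp this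
  rw [hueq, hπid t ht] at hut0
  exact sub_eq_zero.mp hut0
end

section
/- Let H be a real Hilbert space, y₀ ∈ H, and let C : [0,∞) → Conv_H satisfy e(C(t),C(s)) ≤ s − t whenever 0 ≤ t ≤ s. Then the unique locally Lipschitz solution y of the sweeping process driven by C with initial datum y₀ (i.e. y(t) ∈ C(t) for all t, −y′(t) ∈ N_{C(t)}(y(t)) for a.e. t ≥ 0, and y(0) = Proj_{C(0)}(y₀)) is 1-Lipschitz continuous: ‖y(t) − y(s)‖ ≤ |t − s| for all t, s ≥ 0. -/
open Filter Metric Set MeasureTheory Topology Function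
open scoped ENNReal NNReal

variable {H : Type*} [NormedAddCommGroup H] [InnerProductSpace ℝ H]

/-- `y` is a locally Lipschitz solution of the sweeping process driven by `C` with initial
datum `y₀`. -/
def LipSweepSol (C : ℝ → Set H) (y₀ : H) (y : ℝ → H) : Prop :=
  (∀ a b : ℝ, 0 ≤ a → ∃ L : ℝ≥0, LipschitzOnWith L y (Icc a b)) ∧
  (∀ t : ℝ, 0 ≤ t → y t ∈ C t) ∧
  (∀ᵐ t ∂(volume : Measure ℝ), 0 ≤ t →
    ∃ d : H, HasDerivWithinAt y d (Ici 0) t ∧ -d ∈ normalCone (C t) (y t)) ∧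
  IsProj (C 0) y₀ (y 0)


open scoped RealInnerProductSpace

/-- Mean-value-type estimate: a real Lipschitz function whose derivative is a.e. bounded by `1`
on `(a,b)` satisfies `g b - g a ≤ b - a`. -/
lemma real_lip_aux {g : ℝ → ℝ} {a b : ℝ} {L : ℝ≥0} (hab : a ≤ b)
    (hg : LipschitzOnWith L g (Icc a b))
    {s : Set ℝ} (hsm : MeasurableSet s) (hsub : s ⊆ Ioo a b)
    (hnull : volume (Ioo a b \ s) = 0)
    {g' : ℝ → ℝ} (hderiv : ∀ x ∈ s, HasDerivWithinAt g (g' x) s x)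
    (hbound : ∀ x ∈ s, |g' x| ≤ 1) :
    g b - g a ≤ b - a := by
  rcases le_or_gt (g b - g a) 0 with h | h
  · linarith
  have hcont : ContinuousOn g (Icc a b) := hg.continuousOn
  have hIVT : Icc (g a) (g b) ⊆ g '' Icc a b :=
    intermediate_value_Icc hab hcont
  -- bound on the image of the good set via the Jacobian inequality
  have hjac : volume (g '' s) ≤ ∫⁻ x in s, ENNReal.ofReal |g' x| := by
    have := MeasureTheory.addHaar_image_le_lintegral_abs_det_fderiv volume hsm
      (f' := fun x => ContinuousLinearMap.smulRight (1 : ℝ →L[ℝ] ℝ) (g' x))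
      (fun x hx => (hderiv x hx).hasFDerivWithinAt)
    simpa only [ContinuousLinearMap.smulRight_one_eq_toSpanSingleton, ContinuousLinearMap.det_toSpanSingleton] using this
  have h1 : volume (g '' s) ≤ ENNReal.ofReal (b - a) := by
    refine hjac.trans ?_
    calc ∫⁻ x in s, ENNReal.ofReal |g' x|
        ≤ ∫⁻ _ in s, 1 := by
          refine MeasureTheory.setLIntegral_mono measurable_const (fun x hx => ?_)
          simpa using ENNReal.ofReal_le_ofReal (hbound x hx)
      _ = volume s := by simp
      _ ≤ volume (Ioo a b) := measure_mono hsub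
      _ = ENNReal.ofReal (b - a) := Real.volume_Ioo
  -- the bad set has null image since `g` is Lipschitz on `[a,b]`
  have hbadnull : volume (Icc a b \ s) = 0 := by
    have hsub2 : Icc a b \ s ⊆ (Ioo a b \ s) ∪ ({a, b} : Set ℝ) := by
      rintro x ⟨hx, hxs⟩
      rcases eq_or_lt_of_le hx.1 with rfl | hax
      · exact Or.inr (by simp)
      rcases eq_or_lt_of_le hx.2 with rfl | hxb
      · exact Or.inr (by simp)
      · exact Or.inl ⟨⟨hax, hxb⟩, hxs⟩
    refine measure_mono_null hsub2 ?_
    refine measure_union_null hnull ?_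
    exact (Set.toFinite ({a, b} : Set ℝ)).measure_zero _
  have h2 : volume (g '' (Icc a b \ s)) = 0 := by
    have hlip : LipschitzOnWith L g (Icc a b \ s) := hg.mono diff_subset
    have hbd := hlip.hausdorffMeasure_image_le (d := 1) zero_le_one
    rw [MeasureTheory.hausdorffMeasure_real] at hbd
    refine le_antisymm ?_ zero_le
    refine hbd.trans ?_
    rw [hbadnull]
    simp
  -- combine
  have himg : volume (g '' Icc a b) ≤ ENNReal.ofReal (b - a) := by
    have hsplit : g '' Icc a b ⊆ g '' s ∪ g '' (Icc a b \ s) := by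
      rw [← image_union]
      refine image_mono (fun x hx => ?_)
      by_cases hxs : x ∈ s
      · exact Or.inl hxs
      · exact Or.inr ⟨hx, hxs⟩
    calc volume (g '' Icc a b) ≤ volume (g '' s ∪ g '' (Icc a b \ s)) := measure_mono hsplit
      _ ≤ volume (g '' s) + volume (g '' (Icc a b \ s)) := measure_union_le _ _
      _ ≤ ENNReal.ofReal (b - a) + 0 := add_le_add h1 (le_of_eq h2)
      _ = ENNReal.ofReal (b - a) := by simp
  have hfinal : ENNReal.ofReal (g b - g a) ≤ ENNReal.ofReal (b - a) := by
    calc ENNReal.ofReal (g b - g a) = volume (Icc (g a) (g b)) := (Real.volume_Icc).symm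
      _ ≤ volume (g '' Icc a b) := measure_mono hIVT
      _ ≤ ENNReal.ofReal (b - a) := himg
  exact (ENNReal.ofReal_le_ofReal_iff (by linarith)).1 hfinal

/-- Any velocity of the sweeping process is bounded in norm by `1`. -/
lemma sweeping_deriv_norm_le_one {C : ℝ → Set H} {y : ℝ → H} {τ : ℝ} (hτ : 0 < τ)
    (hCne : (C τ).Nonempty)
    (hLip : ∀ t s : ℝ, 0 ≤ t → t ≤ s → excess (C t) (C s) ≤ ENNReal.ofReal (s - t))
    (hyC : ∀ t, 0 ≤ t → y t ∈ C t)
    {d : H} (hd : HasDerivWithinAt y d (Ici 0) τ)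
    (hN : -d ∈ normalCone (C τ) (y τ)) : ‖d‖ ≤ 1 := by
  have key : ∀ ε : ℝ, 0 < ε → ‖d‖ ^ 2 ≤ (1 + 2 * ε) * ‖d‖ := by
    intro ε hε
    have hlo := hasDerivWithinAt_iff_isLittleO.1 hd
    have hev : ∀ᶠ t' in 𝓝[Ici (0:ℝ)] τ, ‖y t' - y τ - (t' - τ) • d‖ ≤ ε * ‖t' - τ‖ :=
      hlo.def hε
    have hmem0 : Ici (0:ℝ) ∈ 𝓝 τ := Ici_mem_nhds hτ
    have hle : 𝓝[<] τ ≤ 𝓝[Ici (0:ℝ)] τ := by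
      rw [nhdsWithin]
      exact le_inf nhdsWithin_le_nhds
        (le_principal_iff.2 (mem_nhdsWithin_of_mem_nhds hmem0))
    have h1 : ∀ᶠ t' in 𝓝[<] τ, ‖y t' - y τ - (t' - τ) • d‖ ≤ ε * ‖t' - τ‖ :=
      hev.filter_mono hle
    have h2 : ∀ᶠ t' in 𝓝[<] τ, (0:ℝ) ≤ t' :=
      mem_nhdsWithin_of_mem_nhds hmem0
    have h3 : ∀ᶠ t' in 𝓝[<] τ, t' < τ := self_mem_nhdsWithin
    obtain ⟨t', hsm, ht0, hlt⟩ := (h1.and (h2.and h3)).exists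
    obtain ⟨ht0, hlt⟩ := ht0, hlt
    set h : ℝ := τ - t' with hh
    have hhpos : 0 < h := by simp only [hh]; linarith
    -- find a point of `C τ` close to `y t'`
    have hxy : y t' ∈ C t' := hyC t' ht0
    have hexc := hLip t' τ ht0 hlt.le
    have hinfE : EMetric.infEdist (y t') (C τ) ≤ ENNReal.ofReal h := by
      refine le_trans ?_ hexc
      exact le_iSup₂ (f := fun x (_ : x ∈ C t') => EMetric.infEdist x (C τ)) (y t') hxy
    have hinf : Metric.infDist (y t') (C τ) ≤ h := by
      have h' := ENNReal.toReal_mono (by simp) hinfE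
      rwa [ENNReal.toReal_ofReal hhpos.le] at h'
    have hlt2 : Metric.infDist (y t') (C τ) < h * (1 + ε) :=
      lt_of_le_of_lt hinf (by nlinarith)
    obtain ⟨v, hv, hdist⟩ := (Metric.infDist_lt_iff hCne).1 hlt2
    -- inner product estimates
    have hA : ⟪y τ - v, d⟫ ≤ (0:ℝ) := by
      have h0 := hN v hv
      rw [inner_neg_right (𝕜 := ℝ)] at h0
      have : ⟪y τ - v, d⟫ = -⟪v - y τ, d⟫ := by
        rw [← inner_neg_left (𝕜 := ℝ)]; congr 1; abel
      rw [this]; linarith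
    have hB : ⟪v - y t', d⟫ ≤ h * (1 + ε) * ‖d‖ := by
      refine (real_inner_le_norm _ _).trans ?_
      have : ‖v - y t'‖ = dist (y t') v := by
        rw [dist_eq_norm, ← norm_neg]; congr 1; abel
      rw [this]
      exact mul_le_mul_of_nonneg_right hdist.le (norm_nonneg d)
    have hvec : y t' - y τ - (t' - τ) • d = y t' - y τ + h • d := by
      have : (t' - τ) • d = -(h • d) := by
        rw [← neg_smul]; congr 1; simp [hh]
      rw [this]; abel
    have hsmall : ‖y t' - y τ + h • d‖ ≤ ε * h := by
      rw [← hvec]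
      refine hsm.trans ?_
      have : ‖t' - τ‖ = h := by
        rw [Real.norm_eq_abs, abs_of_nonpos (by linarith)]; simp [hh]
      rw [this]
    have hCineq : ⟪y t' - y τ + h • d, d⟫ ≤ ε * h * ‖d‖ := by
      refine (real_inner_le_norm _ _).trans ?_
      exact mul_le_mul_of_nonneg_right hsmall (norm_nonneg d)
    have hsum : h * ‖d‖ ^ 2 ≤ h * (1 + ε) * ‖d‖ + ε * h * ‖d‖ := by
      have hdecomp : (h • d : H) = (y τ - v) + (v - y t') + (y t' - y τ + h • d) := by abel
      have hinner : ⟪(h • d : H), d⟫ = ⟪y τ - v, d⟫ + ⟪v - y t', d⟫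
          + ⟪y t' - y τ + h • d, d⟫ := by
        conv_lhs => rw [hdecomp, inner_add_left, inner_add_left]
      have hsl : ⟪(h • d : H), d⟫ = h * ‖d‖ ^ 2 := by
        rw [real_inner_smul_left, real_inner_self_eq_norm_sq]
      rw [hsl] at hinner
      linarith
    have := (mul_le_mul_iff_right₀ hhpos).1 (by nlinarith : h * ‖d‖ ^ 2 ≤ h * ((1 + 2 * ε) * ‖d‖))
    exact this
  by_contra hcon
  push_neg at hcon
  have hkey := key ((‖d‖ - 1) / 4) (by linarith)
  nlinarith [norm_nonneg d]

/-- If the moving set `C` is `1`-Lipschitz continuous with respect to the excess, then the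
solution of the associated sweeping process is `1`-Lipschitz continuous. -/
theorem sweeping_solution_one_lipschitz
    [CompleteSpace H]
    (C : ℝ → Set H) (hC : ∀ t : ℝ, 0 ≤ t → IsConvexBody (C t))
    (hLip : ∀ t s : ℝ, 0 ≤ t → t ≤ s → excess (C t) (C s) ≤ ENNReal.ofReal (s - t))
    (y₀ : H) (y : ℝ → H) (hy : LipSweepSol C y₀ y) :
    ∀ s t : ℝ, 0 ≤ s → 0 ≤ t → ‖y t - y s‖ ≤ |t - s| := by
  obtain ⟨hloc, hmem, hae, _⟩ := hy
  have claim : ∀ a b : ℝ, 0 ≤ a → a ≤ b → ‖y b - y a‖ ≤ b - a := by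
    intro a b ha hab
    by_cases hyeq : y b = y a
    · simp [hyeq]; linarith
    set w : H := y b - y a with hw
    have hwne : w ≠ 0 := sub_ne_zero.2 hyeq
    set u : H := ‖w‖⁻¹ • w with hu
    have hun : ‖u‖ = 1 := by
      rw [hu, norm_smul, norm_inv, norm_norm]
      field_simp [norm_ne_zero_iff.2 hwne]
    obtain ⟨L, hL⟩ := hloc a b ha
    set g : ℝ → ℝ := fun x => (innerSL ℝ u) (y x) with hgdef
    have hgL : LipschitzOnWith (‖innerSL ℝ u‖₊ * L) g (Icc a b) :=
      (innerSL ℝ u).lipschitz.comp_lipschitzOnWith hL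
    -- the exceptional null set
    set P : ℝ → Prop := fun τ =>
      ∃ d : H, HasDerivWithinAt y d (Ici 0) τ ∧ -d ∈ normalCone (C τ) (y τ) with hP
    have hZ : volume {τ : ℝ | ¬ (0 ≤ τ → P τ)} = 0 := by
      have := hae
      rwa [MeasureTheory.ae_iff] at this
    set N : Set ℝ := toMeasurable volume {τ : ℝ | ¬ (0 ≤ τ → P τ)} with hN
    have hNnull : volume N = 0 := by
      rw [hN, measure_toMeasurable]; exact hZ
    set s : Set ℝ := Ioo a b \ N with hs
    have hsm : MeasurableSet s := measurableSet_Ioo.diff (measurableSet_toMeasurable _ _)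
    have hssub : s ⊆ Ioo a b := diff_subset
    have hnull : volume (Ioo a b \ s) = 0 := by
      refine measure_mono_null (fun x hx => ?_) hNnull
      obtain ⟨hx1, hx2⟩ := hx
      by_contra hxN
      exact hx2 ⟨hx1, hxN⟩
    -- the velocity field
    have hPs : ∀ x ∈ s, P x := by
      intro x hx
      have hx0 : 0 ≤ x := le_of_lt (lt_of_le_of_lt ha hx.1.1)
      have : x ∉ {τ : ℝ | ¬ (0 ≤ τ → P τ)} := fun hmem' => hx.2 (subset_toMeasurable _ _ hmem')
      simp only [Set.mem_setOf_eq, not_not] at this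
      exact this hx0
    classical
    set D : ℝ → H := fun x => if hx : P x then hx.choose else 0 with hD
    have hDspec : ∀ x ∈ s, HasDerivWithinAt y (D x) (Ici 0) x ∧
        -(D x) ∈ normalCone (C x) (y x) := by
      intro x hx
      have hp := hPs x hx
      simp only [hD, dif_pos hp]
      exact hp.choose_spec
    have hDle : ∀ x ∈ s, ‖D x‖ ≤ 1 := by
      intro x hx
      have hx0 : 0 < x := lt_of_le_of_lt ha hx.1.1
      exact sweeping_deriv_norm_le_one hx0 ((hC x hx0.le).1) hLip hmem
        (hDspec x hx).1 (hDspec x hx).2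
    set g' : ℝ → ℝ := fun x => (innerSL ℝ u) (D x) with hg'
    have hgderiv : ∀ x ∈ s, HasDerivWithinAt g (g' x) s x := by
      intro x hx
      have hsub' : s ⊆ Ici (0:ℝ) := fun z hz => le_of_lt (lt_of_le_of_lt ha hz.1.1)
      exact (innerSL ℝ u).hasFDerivAt.comp_hasDerivWithinAt x
        (((hDspec x hx).1).mono hsub')
    have hgbound : ∀ x ∈ s, |g' x| ≤ 1 := by
      intro x hx
      have h1 : g' x = ⟪u, D x⟫ := by simp [hg', innerSL_apply_apply]
      rw [h1]
      calc abs (⟪u, D x⟫) ≤ ‖u‖ * ‖D x‖ := abs_real_inner_le_norm _ _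
        _ ≤ 1 * 1 := by
            refine mul_le_mul (le_of_eq hun) (hDle x hx) (norm_nonneg _) zero_le_one
        _ = 1 := one_mul 1
    have hmain := real_lip_aux hab hgL hsm hssub hnull hgderiv hgbound
    have hgab : g b - g a = ‖w‖ := by
      have h1 : g b - g a = ⟪u, w⟫ := by
        simp only [hgdef, innerSL_apply_apply, hw]
        rw [inner_sub_right]
      rw [h1, hu, real_inner_smul_left, real_inner_self_eq_norm_sq]
      have : ‖w‖ ≠ 0 := norm_ne_zero_iff.2 hwne
      field_simp
    rw [hgab] at hmain
    exact hmain
  intro s t hs ht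
  rcases le_total s t with h | h
  · rw [abs_of_nonneg (by linarith : (0:ℝ) ≤ t - s)]
    exact claim s t hs h
  · rw [abs_of_nonpos (by linarith : t - s ≤ 0), norm_sub_rev]
    have := claim t s ht h
    linarith
end

section
/- Let H be a real Hilbert space, T > 0, and let μ be a positive Borel measure on [0,T) which is finite on compact sets. If f ∈ L¹([0,T), μ; H) (Bochner integrable, in particular μ-essentially separably valued), then μ-a.e. t ∈ [0,T) is a right μ-Lebesgue point of f, i.e. lim_{h↓0} (1/μ([t,t+h])) ∫_{[t,t+h]} ‖f(τ) − f(t)‖ dμ(τ) = 0 for μ-a.e. t ∈ [0,T). -/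
open Filter Metric Set MeasureTheory Topology
open scoped ENNReal NNReal

variable {H : Type*} [NormedAddCommGroup H] [InnerProductSpace ℝ H]

noncomputable def cdfF (ν : Measure ℝ) : ℝ → ℝ := fun t => (ν (Iic t)).toReal

section CDF
variable (ν : Measure ℝ) [IsFiniteMeasure ν]

lemma cdfF_mono : Monotone (cdfF ν) := fun s t hst =>
  ENNReal.toReal_mono (measure_ne_top ν _) (measure_mono (Iic_subset_Iic.2 hst))

lemma measure_Iic_eq (t : ℝ) : ν (Iic t) = ENNReal.ofReal (cdfF ν t) :=
  (ENNReal.ofReal_toReal (measure_ne_top ν _)).symm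

lemma cdfF_nonneg (t : ℝ) : 0 ≤ cdfF ν t := ENNReal.toReal_nonneg

lemma cdfF_sub {s t : ℝ} (hst : s ≤ t) :
    cdfF ν t - cdfF ν s = (ν (Ioc s t)).toReal := by
  have h : ν (Iic s) + ν (Ioc s t) = ν (Iic t) := by
    rw [← measure_union (by simp [disjoint_left]; intro a ha ha' ; linarith) measurableSet_Ioc,
      Iic_union_Ioc_eq_Iic hst]
  have := congrArg ENNReal.toReal h
  rw [ENNReal.toReal_add (measure_ne_top ν _) (measure_ne_top ν _)] at this
  unfold cdfF
  linarith

lemma measure_Ioc_eq (s t : ℝ) (hst : s ≤ t) :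
    ν (Ioc s t) = ENNReal.ofReal (cdfF ν t - cdfF ν s) := by
  rw [cdfF_sub ν hst, ENNReal.ofReal_toReal (measure_ne_top ν _)]

lemma cdfF_cont [NullSingletonClass ν] : Continuous (cdfF ν) := by
  rw [continuous_iff_continuousAt]
  intro t
  rw [continuousAt_iff_continuous_left_right]
  constructor
  · -- left continuity
    rw [Metric.continuousWithinAt_iff]
    intro ε εpos
    have h1 : Tendsto (fun n : ℕ => ν (Ioc (t - 1 / (n + 1)) t)) atTop
        (𝓝 (ν (⋂ n : ℕ, Ioc (t - 1 / (n + 1)) t))) := by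
      apply tendsto_measure_iInter_atTop
        (fun n => measurableSet_Ioc.nullMeasurableSet)
      · intro i j hij
        apply Ioc_subset_Ioc_left
        have : (1:ℝ) / (j + 1) ≤ 1 / (i + 1) := by
          apply one_div_le_one_div_of_le (by positivity) (by exact_mod_cast by omega)
        linarith
      · exact ⟨0, measure_ne_top ν _⟩
    have h2 : (⋂ n : ℕ, Ioc (t - 1 / (n + 1)) t) = {t} := by
      apply Subset.antisymm
      · intro x hx
        simp only [mem_iInter, mem_Ioc] at hx
        have hxle : x ≤ t := (hx 0).2
        have : t ≤ x := by
          by_contra hlt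
          push_neg at hlt
          obtain ⟨n, hn⟩ := exists_nat_one_div_lt (show 0 < t - x by linarith)
          have := (hx n).1
          linarith
        simp [le_antisymm hxle this]
      · intro x hx
        simp only [mem_singleton_iff] at hx
        subst hx
        simp only [mem_iInter, mem_Ioc]
        intro n
        constructor
        · have : (0:ℝ) < 1 / (n + 1) := by positivity
          linarith
        · exact le_rfl
    rw [h2, measure_singleton] at h1
    obtain ⟨n, hn⟩ : ∃ n : ℕ, (ν (Ioc (t - 1 / (n + 1)) t)).toReal < ε := by
      have := (ENNReal.tendsto_toReal (ENNReal.zero_ne_top)).comp h1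
      simp only [ENNReal.toReal_zero] at this
      exact ((this.eventually_lt_const εpos).exists)
    refine ⟨1 / (n + 1), by positivity, fun x hx hdist => ?_⟩
    have hxt : x ≤ t := hx
    have hgt : t - 1 / (n + 1) < x := by
      rw [Real.dist_eq, abs_lt] at hdist
      linarith [hdist.1]
    rw [Real.dist_eq, abs_lt]
    have hle : cdfF ν x ≤ cdfF ν t := cdfF_mono ν hxt
    have : cdfF ν t - cdfF ν x = (ν (Ioc x t)).toReal := cdfF_sub ν hxt
    have hmono : (ν (Ioc x t)).toReal ≤ (ν (Ioc (t - 1 / (n + 1)) t)).toReal :=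
      ENNReal.toReal_mono (measure_ne_top ν _) (measure_mono (Ioc_subset_Ioc_left hgt.le))
    constructor <;> linarith
  · -- right continuity
    rw [Metric.continuousWithinAt_iff]
    intro ε εpos
    have h1 : Tendsto (fun n : ℕ => ν (Ioc t (t + 1 / (n + 1)))) atTop
        (𝓝 (ν (⋂ n : ℕ, Ioc t (t + 1 / (n + 1))))) := by
      apply tendsto_measure_iInter_atTop
        (fun n => measurableSet_Ioc.nullMeasurableSet)
      · intro i j hij
        apply Ioc_subset_Ioc_right
        have : (1:ℝ) / (j + 1) ≤ 1 / (i + 1) := by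
          apply one_div_le_one_div_of_le (by positivity) (by exact_mod_cast by omega)
        linarith
      · exact ⟨0, measure_ne_top ν _⟩
    have h2 : (⋂ n : ℕ, Ioc t (t + 1 / (n + 1))) = ∅ := by
      apply eq_empty_of_forall_notMem
      intro x hx
      simp only [mem_iInter, mem_Ioc] at hx
      have hxgt : t < x := (hx 0).1
      obtain ⟨n, hn⟩ := exists_nat_one_div_lt (show 0 < x - t by linarith)
      have := (hx n).2
      linarith
    rw [h2, measure_empty] at h1
    obtain ⟨n, hn⟩ : ∃ n : ℕ, (ν (Ioc t (t + 1 / (n + 1)))).toReal < ε := by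
      have := (ENNReal.tendsto_toReal (ENNReal.zero_ne_top)).comp h1
      simp only [ENNReal.toReal_zero] at this
      exact ((this.eventually_lt_const εpos).exists)
    refine ⟨1 / (n + 1), by positivity, fun x hx hdist => ?_⟩
    have hxt : t ≤ x := hx
    have hlt : x ≤ t + 1 / (n + 1) := by
      rw [Real.dist_eq, abs_lt] at hdist
      linarith [hdist.2]
    rw [Real.dist_eq, abs_lt]
    have hle : cdfF ν t ≤ cdfF ν x := cdfF_mono ν hxt
    have : cdfF ν x - cdfF ν t = (ν (Ioc t x)).toReal := cdfF_sub ν hxt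
    have hmono : (ν (Ioc t x)).toReal ≤ (ν (Ioc t (t + 1 / (n + 1)))).toReal :=
      ENNReal.toReal_mono (measure_ne_top ν _) (measure_mono (Ioc_subset_Ioc_right hlt))
    constructor <;> linarith

end CDF

noncomputable def invG (ν : Measure ℝ) : ℝ → ℝ :=
  fun s => sInf {u | 0 ≤ u ∧ min s (ν univ).toReal ≤ cdfF ν u}

section InvG
variable (ν : Measure ℝ) [IsFiniteMeasure ν] [NullSingletonClass ν]
variable {T : ℝ} (hT : 0 < T) (hν0 : ν (Iio 0) = 0) (hνT : ν (Ici T) = 0)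
include hT hν0 hνT

lemma cdfF_nonpos {t : ℝ} (ht : t ≤ 0) : cdfF ν t = 0 := by
  have : ν (Iic t) = 0 := by
    have h1 : ν (Iic t) ≤ ν (Iio 0) + ν {0} := by
      refine le_trans (measure_mono ?_) (measure_union_le _ _)
      intro x hx
      rcases lt_or_eq_of_le (le_trans hx ht) with h | h
      · exact Or.inl h
      · exact Or.inr h
    simpa [hν0, measure_singleton] using h1
  simp [cdfF, this]

lemma cdfF_ge_T {t : ℝ} (ht : T ≤ t) : cdfF ν t = (ν univ).toReal := by
  have h1 : ν (Iic t) = ν univ := by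
    have h2 : ν univ ≤ ν (Iic t) + ν (Ioi t) := by
      refine le_trans (measure_mono ?_) (measure_union_le _ _)
      intro x _
      exact le_or_gt x t
    have h3 : ν (Ioi t) = 0 :=
      measure_mono_null (fun x hx => le_trans ht (le_of_lt hx)) hνT
    rw [h3, add_zero] at h2
    exact le_antisymm (measure_mono (subset_univ _)) h2
  simp [cdfF, h1]

lemma cdfF_le_M (t : ℝ) : cdfF ν t ≤ (ν univ).toReal :=
  ENNReal.toReal_mono (measure_ne_top ν _) (measure_mono (subset_univ _))

lemma invG_mem (s : ℝ) : invG ν s ∈ {u | 0 ≤ u ∧ min s (ν univ).toReal ≤ cdfF ν u} := by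
  apply IsClosed.csInf_mem
  · have : {u | 0 ≤ u ∧ min s (ν univ).toReal ≤ cdfF ν u}
        = Ici 0 ∩ (cdfF ν) ⁻¹' (Ici (min s (ν univ).toReal)) := by
      ext u; simp [and_comm]
    rw [this]
    exact isClosed_Ici.inter ((isClosed_Ici).preimage (cdfF_cont ν))
  · refine ⟨T, hT.le, ?_⟩
    rw [cdfF_ge_T ν hT hν0 hνT le_rfl]
    exact min_le_right _ _
  · exact ⟨0, fun u hu => hu.1⟩

lemma invG_nonneg (s : ℝ) : 0 ≤ invG ν s := (invG_mem ν hT hν0 hνT s).1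

lemma invG_mono : Monotone (invG ν) := by
  intro s₁ s₂ h
  apply csInf_le_csInf ⟨0, fun u hu => hu.1⟩
  · refine ⟨T, hT.le, ?_⟩
    rw [cdfF_ge_T ν hT hν0 hνT le_rfl]
    exact min_le_right _ _
  · intro u hu
    exact ⟨hu.1, le_trans (min_le_min_right _ h) hu.2⟩

lemma cdfF_invG {s : ℝ} (hs : s ∈ Icc 0 (ν univ).toReal) :
    cdfF ν (invG ν s) = s := by
  have hmin : min s (ν univ).toReal = s := min_eq_left hs.2
  have h1 : s ≤ cdfF ν (invG ν s) := by
    have := (invG_mem ν hT hν0 hνT s).2; rwa [hmin] at this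
  refine le_antisymm ?_ h1
  by_contra hlt
  push_neg at hlt
  -- cdfF (invG s) > s; find u < invG s with s ≤ cdfF u
  have hpos : 0 < invG ν s := by
    rcases lt_or_eq_of_le (invG_nonneg ν hT hν0 hνT s) with h | h
    · exact h
    · exfalso
      have : cdfF ν 0 = 0 := cdfF_nonpos ν hT hν0 hνT le_rfl
      rw [← h, this] at hlt
      exact absurd hs.1 (not_le.2 hlt)
  have htend : Tendsto (cdfF ν) (𝓝[<] (invG ν s)) (𝓝 (cdfF ν (invG ν s))) :=
    ((cdfF_cont ν).tendsto _).mono_left nhdsWithin_le_nhds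
  have hev : ∀ᶠ u in 𝓝[<] (invG ν s), s < cdfF ν u :=
    htend.eventually_const_lt hlt
  have hev2 : ∀ᶠ u in 𝓝[<] (invG ν s), 0 < u :=
    eventually_nhdsWithin_of_eventually_nhds (eventually_gt_nhds hpos) |>.mono (fun u hu => hu)
  obtain ⟨u, hu1, hu2, hu3⟩ := (hev.and (hev2.and self_mem_nhdsWithin)).exists
  have : invG ν s ≤ u := csInf_le ⟨0, fun v hv => hv.1⟩ ⟨hu2.le, by rw [hmin]; exact hu1.le⟩
  exact absurd hu3 (not_lt.2 this)

lemma invG_le_iff {s t : ℝ} (hs : s ∈ Icc 0 (ν univ).toReal) (ht : 0 ≤ t) :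
    invG ν s ≤ t ↔ s ≤ cdfF ν t := by
  constructor
  · intro h
    calc s = cdfF ν (invG ν s) := (cdfF_invG ν hT hν0 hνT hs).symm
    _ ≤ cdfF ν t := cdfF_mono ν h
  · intro h
    exact csInf_le ⟨0, fun v hv => hv.1⟩ ⟨ht, le_trans (min_le_left _ _) h⟩

end InvG

section Map
variable (ν : Measure ℝ) [IsFiniteMeasure ν] [NullSingletonClass ν]
variable {T : ℝ} (hT : 0 < T) (hν0 : ν (Iio 0) = 0) (hνT : ν (Ici T) = 0)
include hT hν0 hνT

lemma map_cdfF : Measure.map (cdfF ν) ν = volume.restrict (Icc 0 (ν univ).toReal) := by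
  set M := (ν univ).toReal with hMdef
  have hM : 0 ≤ M := ENNReal.toReal_nonneg
  have hFm : Measurable (cdfF ν) := (cdfF_cont ν).measurable
  haveI : IsFiniteMeasure (Measure.map (cdfF ν) ν) := by
    constructor
    rw [Measure.map_apply hFm MeasurableSet.univ]
    exact measure_lt_top ν _
  apply MeasureTheory.Measure.ext_of_Iic
  intro y
  rw [Measure.map_apply hFm measurableSet_Iic, Measure.restrict_apply measurableSet_Iic]
  rcases lt_or_ge y 0 with hy | hy
  · have h1 : cdfF ν ⁻¹' Iic y = ∅ := by
      apply eq_empty_of_forall_notMem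
      intro x hx
      exact absurd (le_trans (cdfF_nonneg ν x) hx) (not_le.2 hy)
    have h2 : Iic y ∩ Icc 0 M = ∅ := by
      apply eq_empty_of_forall_notMem
      intro x hx
      exact absurd (le_trans hx.2.1 hx.1) (not_le.2 hy)
    rw [h1, h2]
    simp
  rcases le_or_gt M y with hy2 | hy2
  · have h1 : cdfF ν ⁻¹' Iic y = univ := by
      apply eq_univ_of_forall
      intro x
      exact le_trans (cdfF_le_M ν hT hν0 hνT x) hy2
    have h2 : Iic y ∩ Icc 0 M = Icc 0 M := by
      apply inter_eq_self_of_subset_right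
      intro x hx
      exact le_trans hx.2 hy2
    rw [h1, h2, Real.volume_Icc, sub_zero, hMdef, ENNReal.ofReal_toReal (measure_ne_top ν _)]
  · -- 0 ≤ y < M
    set S := {t : ℝ | cdfF ν t ≤ y} with hSdef
    have hSne : S.Nonempty := ⟨-1, by
      simp only [hSdef, mem_setOf_eq]
      rw [cdfF_nonpos ν hT hν0 hνT (by norm_num)]
      exact hy⟩
    have hSbdd : BddAbove S := by
      refine ⟨T, fun t ht => ?_⟩
      by_contra hlt
      push_neg at hlt
      have := cdfF_ge_T ν hT hν0 hνT hlt.le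
      rw [hSdef] at ht
      simp only [mem_setOf_eq] at ht
      rw [this] at ht
      exact absurd (lt_of_le_of_lt ht hy2) (lt_irrefl _)
    have hScl : IsClosed S := isClosed_le (cdfF_cont ν) continuous_const
    have haS : sSup S ∈ S := hScl.csSup_mem hSne hSbdd
    set a := sSup S with hadef
    have hFa : cdfF ν a = y := by
      refine le_antisymm haS ?_
      by_contra hlt
      push_neg at hlt
      have htend : Tendsto (cdfF ν) (𝓝[>] a) (𝓝 (cdfF ν a)) :=
        ((cdfF_cont ν).tendsto _).mono_left nhdsWithin_le_nhds
      have hev : ∀ᶠ u in 𝓝[>] a, cdfF ν u < y := htend.eventually_lt_const hlt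
      obtain ⟨u, hu1, hu2⟩ := (hev.and self_mem_nhdsWithin).exists
      exact absurd (le_csSup hSbdd hu1.le) (not_le.2 hu2)
    have h1 : cdfF ν ⁻¹' Iic y = Iic a := by
      ext t
      simp only [mem_preimage, mem_Iic]
      constructor
      · intro ht
        exact le_csSup hSbdd ht
      · intro ht
        calc cdfF ν t ≤ cdfF ν a := cdfF_mono ν ht
        _ = y := hFa
    have h2 : Iic y ∩ Icc 0 M = Icc 0 y := by
      ext x
      simp only [mem_inter_iff, mem_Iic, mem_Icc]
      constructor
      · rintro ⟨hx1, hx2, _⟩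
        exact ⟨hx2, hx1⟩
      · rintro ⟨hx1, hx2⟩
        exact ⟨hx2, hx1, le_trans hx2 hy2.le⟩
    rw [h1, h2, Real.volume_Icc, measure_Iic_eq ν a, hFa]
    simp

lemma map_invG :
    Measure.map (invG ν) (volume.restrict (Icc 0 (ν univ).toReal)) = ν := by
  set M := (ν univ).toReal with hMdef
  have hGm : Measurable (invG ν) := (invG_mono ν hT hν0 hνT).measurable
  haveI : IsFiniteMeasure (volume.restrict (Icc 0 M)) := by
    constructor
    rw [Measure.restrict_apply_univ, Real.volume_Icc]
    exact ENNReal.ofReal_lt_top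
  haveI : IsFiniteMeasure (Measure.map (invG ν) (volume.restrict (Icc 0 M))) := by
    constructor
    rw [Measure.map_apply hGm MeasurableSet.univ]
    exact measure_lt_top _ _
  apply MeasureTheory.Measure.ext_of_Iic
  intro t
  rw [Measure.map_apply hGm measurableSet_Iic, Measure.restrict_apply (hGm measurableSet_Iic)]
  rcases lt_or_ge t 0 with ht | ht
  · have h1 : invG ν ⁻¹' Iic t ∩ Icc 0 M = ∅ := by
      apply eq_empty_of_forall_notMem
      rintro s ⟨hs1, _⟩
      simp only [mem_preimage, mem_Iic] at hs1
      exact absurd (le_trans (invG_nonneg ν hT hν0 hνT s) hs1) (not_le.2 ht)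
    have h2 : ν (Iic t) = 0 := by
      apply measure_mono_null _ hν0
      intro x hx
      exact lt_of_le_of_lt hx ht
    rw [h1, h2]
    simp
  · have h1 : invG ν ⁻¹' Iic t ∩ Icc 0 M = Icc 0 (cdfF ν t) := by
      ext s
      simp only [mem_inter_iff, mem_preimage, mem_Iic, mem_Icc]
      constructor
      · rintro ⟨hs1, hs2, hs3⟩
        exact ⟨hs2, (invG_le_iff ν hT hν0 hνT ⟨hs2, hs3⟩ ht).1 hs1⟩
      · rintro ⟨hs1, hs2⟩
        have hsM : s ≤ M := le_trans hs2 (cdfF_le_M ν hT hν0 hνT t)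
        exact ⟨(invG_le_iff ν hT hν0 hνT ⟨hs1, hsM⟩ ht).2 hs2, hs1, hsM⟩
    rw [h1, Real.volume_Icc, measure_Iic_eq ν t]
    simp

end Map

section AE
variable (ν : Measure ℝ) [IsFiniteMeasure ν] [NullSingletonClass ν]
variable {T : ℝ} (hT : 0 < T) (hν0 : ν (Iio 0) = 0) (hνT : ν (Ici T) = 0)
include hT hν0 hνT

lemma null_level (c : ℝ) : ν (cdfF ν ⁻¹' {c}) = 0 := by
  have hFm : Measurable (cdfF ν) := (cdfF_cont ν).measurable
  rw [← Measure.map_apply hFm (measurableSet_singleton c), map_cdfF ν hT hν0 hνT,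
    Measure.restrict_apply (measurableSet_singleton c)]
  exact measure_mono_null inter_subset_left (measure_singleton c)

lemma ae_invG_cdfF : ∀ᵐ τ ∂ν, invG ν (cdfF ν τ) = τ := by
  rw [ae_iff]
  refine measure_mono_null (fun τ hτ => ?_)
    (measure_union_null hν0 (measure_iUnion_null fun (q : ℚ) => null_level ν hT hν0 hνT ((cdfF ν) (q : ℝ))))
  simp only [mem_setOf_eq] at hτ
  rcases lt_or_ge τ 0 with h | h
  · exact Or.inl h
  · right
    set u := invG ν (cdfF ν τ) with hu
    have huτ : u ≤ τ :=
      (invG_le_iff ν hT hν0 hνT ⟨cdfF_nonneg ν _, cdfF_le_M ν hT hν0 hνT τ⟩ h).2 le_rfl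
    have hult : u < τ := lt_of_le_of_ne huτ hτ
    have hFu : cdfF ν u = cdfF ν τ := by
      refine le_antisymm (cdfF_mono ν huτ) ?_
      exact (cdfF_invG ν hT hν0 hνT ⟨cdfF_nonneg ν _, cdfF_le_M ν hT hν0 hνT τ⟩).symm.le
    obtain ⟨q, hq1, hq2⟩ := exists_rat_btwn hult
    have : cdfF ν (q : ℝ) = cdfF ν τ := by
      refine le_antisymm (cdfF_mono ν hq2.le) ?_
      rw [← hFu]
      exact cdfF_mono ν hq1.le
    exact mem_iUnion.2 ⟨q, by simp [this]⟩

lemma ae_strict : ∀ᵐ t ∂ν, ∀ h : ℝ, 0 < h → cdfF ν t < cdfF ν (t + h) := by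
  rw [ae_iff]
  refine measure_mono_null (fun t ht => ?_)
    (measure_iUnion_null fun (q : ℚ) => null_level ν hT hν0 hνT ((cdfF ν) (q : ℝ)))
  simp only [mem_setOf_eq, not_forall] at ht
  obtain ⟨h, hpos, hne⟩ := ht
  have hle : cdfF ν t ≤ cdfF ν (t + h) := cdfF_mono ν (by linarith)
  have heq : cdfF ν (t + h) = cdfF ν t := le_antisymm (not_lt.1 hne) hle
  obtain ⟨q, hq1, hq2⟩ := exists_rat_btwn (show t < t + h by linarith)
  have : cdfF ν (q : ℝ) = cdfF ν t := by
    refine le_antisymm ?_ (cdfF_mono ν hq1.le)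
    rw [← heq]
    exact cdfF_mono ν hq2.le
  exact mem_iUnion.2 ⟨q, by simp [this]⟩

end AE

section Numer
variable {H : Type*} [NormedAddCommGroup H] [InnerProductSpace ℝ H] [CompleteSpace H]
variable (ν : Measure ℝ) [IsFiniteMeasure ν] [NullSingletonClass ν]
variable {T : ℝ} (hT : 0 < T) (hν0 : ν (Iio 0) = 0) (hνT : ν (Ici T) = 0)
include hT hν0 hνT

lemma aesm_comp_invG (f : ℝ → H) (hf : AEStronglyMeasurable f ν) :
    AEStronglyMeasurable (fun s => f (invG ν s))
      (volume.restrict (Icc 0 (ν univ).toReal)) := by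
  have hGm : Measurable (invG ν) := (invG_mono ν hT hν0 hνT).measurable
  have : AEStronglyMeasurable f
      (Measure.map (invG ν) (volume.restrict (Icc 0 (ν univ).toReal))) := by
    rw [map_invG ν hT hν0 hνT]; exact hf
  exact this.comp_measurable hGm

lemma numer_eq (f : ℝ → H) (hf : AEStronglyMeasurable f ν)
    {t : ℝ} (c : H) (hGFt : invG ν (cdfF ν t) = t) (h : ℝ) (h0 : 0 ≤ h) :
    ∫ τ in Icc t (t + h), ‖f τ - c‖ ∂ν
      = ∫ y in Icc (cdfF ν t) (cdfF ν (t + h)), ‖f (invG ν y) - c‖ ∂volume := by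
  have hFm : Measurable (cdfF ν) := (cdfF_cont ν).measurable
  set M := (ν univ).toReal with hMdef
  set s := cdfF ν t with hs
  set s' := cdfF ν (t + h) with hs'
  have hss' : s ≤ s' := cdfF_mono ν (by linarith)
  have hsub : Icc s s' ⊆ Icc 0 M := fun y hy =>
    ⟨le_trans (cdfF_nonneg ν t) hy.1, le_trans hy.2 (cdfF_le_M ν hT hν0 hνT _)⟩
  set ρ : ℝ → ℝ := (Icc s s').indicator (fun y => ‖f (invG ν y) - c‖) with hρ
  -- step 1: write LHS as integral of an indicator
  rw [← integral_indicator measurableSet_Icc]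
  -- step 2: a.e. congruence
  have hcong : (fun τ => (Icc t (t + h)).indicator (fun τ => ‖f τ - c‖) τ)
      =ᵐ[ν] fun τ => ρ (cdfF ν τ) := by
    have h1 : ∀ᵐ τ ∂ν, cdfF ν τ ≠ s ∨ τ ∈ Icc t (t + h) := by
      filter_upwards [measure_eq_zero_iff_ae_notMem.mp (null_level ν hT hν0 hνT s)] with τ hτ
      exact Or.inl hτ
    have h2 : ∀ᵐ τ ∂ν, cdfF ν τ ≠ s' ∨ τ ∈ Icc t (t + h) := by
      filter_upwards [measure_eq_zero_iff_ae_notMem.mp (null_level ν hT hν0 hνT s')] with τ hτ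
      exact Or.inl hτ
    filter_upwards [ae_invG_cdfF ν hT hν0 hνT, h1, h2] with τ hGF hτ1 hτ2
    by_cases hmem : τ ∈ Icc t (t + h)
    · have hFτ : cdfF ν τ ∈ Icc s s' := ⟨cdfF_mono ν hmem.1, cdfF_mono ν hmem.2⟩
      rw [indicator_of_mem hmem, hρ, indicator_of_mem hFτ, hGF]
    · rw [indicator_of_notMem hmem, hρ]
      have : cdfF ν τ ∉ Icc s s' := by
        intro hFτ
        rcases not_and_or.mp (mem_Icc.not.mp hmem) with hlt | hgt
        · push_neg at hlt
          have h1' := hτ1.resolve_right hmem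
          exact h1' (le_antisymm (cdfF_mono ν hlt.le) hFτ.1)
        · push_neg at hgt
          have h2' := hτ2.resolve_right hmem
          exact h2' (le_antisymm hFτ.2 (cdfF_mono ν hgt.le))
      rw [indicator_of_notMem this]
  rw [integral_congr_ae hcong]
  -- step 3: pushforward
  have hρm : AEStronglyMeasurable ρ (volume.restrict (Icc 0 M)) := by
    apply AEStronglyMeasurable.indicator _ measurableSet_Icc
    exact ((aesm_comp_invG ν hT hν0 hνT f hf).sub aestronglyMeasurable_const).norm
  have hstep3 : ∫ τ, ρ (cdfF ν τ) ∂ν = ∫ y, ρ y ∂(volume.restrict (Icc 0 M)) := by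
    rw [← integral_map hFm.aemeasurable]
    · rw [map_cdfF ν hT hν0 hνT]
    · rw [map_cdfF ν hT hν0 hνT]; exact hρm
  rw [hstep3, hρ, integral_indicator measurableSet_Icc,
    Measure.restrict_restrict measurableSet_Icc, inter_eq_self_of_subset_left hsub]

end Numer

section Part2
variable {H : Type*} [NormedAddCommGroup H] [InnerProductSpace ℝ H] [CompleteSpace H]

lemma part2
    (T : ℝ) (hT : 0 < T) (ν μd : Measure ℝ) [IsFiniteMeasure ν] [NullSingletonClass ν]
    [IsFiniteMeasure μd]
    (hν0 : ν (Iio 0) = 0) (hνT : ν (Ici T) = 0)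
    (D : Set ℝ) (hDc : D.Countable) (hcar : μd Dᶜ = 0)
    (f : ℝ → H) (hfν : Integrable f ν) (hfd : Integrable f μd) :
    ∀ᵐ t ∂ν, t ∈ Ico 0 T →
      Tendsto (fun h : ℝ =>
          (∫ τ in Icc t (t + h), ‖f τ - f t‖ ∂(μd + ν)) / ((μd + ν) (Icc t (t + h))).toReal)
        (𝓝[>] 0) (𝓝 0) := by
  classical
  set M := (ν univ).toReal with hMdef
  have hFm : Measurable (cdfF ν) := (cdfF_cont ν).measurable
  have hGm : Measurable (invG ν) := (invG_mono ν hT hν0 hνT).measurable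
  set vol' := volume.restrict (Icc 0 M) with hvol'
  -- the transported function
  set φ : ℝ → H := (Icc 0 M).indicator (fun y => f (invG ν y)) with hφ
  have hφm : AEStronglyMeasurable φ volume :=
    (aestronglyMeasurable_indicator_iff measurableSet_Icc).2
      (aesm_comp_invG ν hT hν0 hνT f hfν.1)
  have hφint : Integrable φ volume := by
    rw [hφ, integrable_indicator_iff measurableSet_Icc]
    refine ⟨aesm_comp_invG ν hT hν0 hνT f hfν.1, ?_⟩
    have hg : AEMeasurable (fun τ => (‖f τ‖₊ : ℝ≥0∞))
        (Measure.map (invG ν) (volume.restrict (Icc 0 M))) := by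
      rw [map_invG ν hT hν0 hνT]
      exact hfν.1.nnnorm.aemeasurable.coe_nnreal_ennreal
    have : ∫⁻ y, (‖f (invG ν y)‖₊ : ℝ≥0∞) ∂vol' = ∫⁻ τ, (‖f τ‖₊ : ℝ≥0∞) ∂ν := by
      rw [hvol', ← lintegral_map' hg hGm.aemeasurable, map_invG ν hT hν0 hνT]
    rw [HasFiniteIntegral]
    change ∫⁻ y, (‖f (invG ν y)‖₊ : ℝ≥0∞) ∂vol' < ∞
    rw [this]
    exact hfν.2
  -- Lebesgue points of φ w.r.t. the Vitali family of volume
  set vFam := IsUnifLocDoublingMeasure.vitaliFamily (volume : Measure ℝ) 1 with hvFam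
  have hA : ∀ᵐ y ∂(volume : Measure ℝ),
      Tendsto (fun a => ⨍ z in a, ‖φ z - φ y‖ ∂volume) (vFam.filterAt y) (𝓝 0) :=
    vFam.ae_tendsto_average_norm_sub hφint.locallyIntegrable
  -- singular parts
  set ν₁ := μd.withDensity (fun τ => (‖f τ‖₊ : ℝ≥0∞)) with hν₁
  haveI : IsFiniteMeasure ν₁ := by
    constructor
    rw [hν₁, withDensity_apply _ MeasurableSet.univ, setLIntegral_univ]
    exact hfd.2
  set lam1 := Measure.map (cdfF ν) ν₁ with hlam1
  set lam2 := Measure.map (cdfF ν) μd with hlam2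
  haveI : IsFiniteMeasure lam1 := by
    constructor; rw [hlam1, Measure.map_apply hFm MeasurableSet.univ]; exact measure_lt_top _ _
  haveI : IsFiniteMeasure lam2 := by
    constructor; rw [hlam2, Measure.map_apply hFm MeasurableSet.univ]; exact measure_lt_top _ _
  have hsing : ∀ lam : Measure ℝ, lam = lam1 ∨ lam = lam2 → lam ⟂ₘ volume := by
    rintro lam (rfl | rfl) <;>
    · refine ⟨(cdfF ν '' D)ᶜ, (hDc.image _).measurableSet.compl, ?_, ?_⟩
      · rw [Measure.map_apply hFm (hDc.image _).measurableSet.compl]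
        have hsub : cdfF ν ⁻¹' (cdfF ν '' D)ᶜ ⊆ Dᶜ := by
          intro τ hτ hτD
          exact hτ (mem_image_of_mem _ hτD)
        first
        | exact measure_mono_null hsub ((withDensity_absolutelyContinuous _ _) hcar)
        | exact measure_mono_null hsub hcar
      · rw [compl_compl]
        exact ((hDc.image _).measure_zero volume)
  have hB : ∀ᵐ y ∂(volume : Measure ℝ),
      Tendsto (fun a => lam1 a / volume a) (vFam.filterAt y) (𝓝 0) :=
    vFam.ae_eventually_measure_zero_of_singular (hsing lam1 (Or.inl rfl))
  have hC : ∀ᵐ y ∂(volume : Measure ℝ),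
      Tendsto (fun a => lam2 a / volume a) (vFam.filterAt y) (𝓝 0) :=
    vFam.ae_eventually_measure_zero_of_singular (hsing lam2 (Or.inr rfl))
  -- pull back along F
  have hpull : ∀ (Q : ℝ → Prop), (∀ᵐ y ∂(volume : Measure ℝ), Q y) →
      ∀ᵐ τ ∂ν, Q (cdfF ν τ) := by
    intro Q hQ
    apply ae_of_ae_map hFm.aemeasurable
    rw [map_cdfF ν hT hν0 hνT]
    exact ae_restrict_of_ae hQ
  filter_upwards [hpull _ hA, hpull _ hB, hpull _ hC, ae_invG_cdfF ν hT hν0 hνT,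
    ae_strict ν hT hν0 hνT] with t hAt hBt hCt hGFt hstrict htIco
  set s := cdfF ν t with hsdef
  have hsmem : s ∈ Icc 0 M := ⟨cdfF_nonneg ν t, cdfF_le_M ν hT hν0 hνT t⟩
  have hφs : φ s = f t := by
    rw [hφ, indicator_of_mem hsmem, hsdef, hGFt]
  -- convergence of the right endpoint in the image
  have htends' : Tendsto (fun h : ℝ => cdfF ν (t + h)) (𝓝[>] 0) (𝓝[>] s) := by
    rw [tendsto_nhdsWithin_iff]
    constructor
    · have h1 : Tendsto (fun h : ℝ => t + h) (𝓝[>] (0:ℝ)) (𝓝 t) := by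
        have h2 : Tendsto (fun h : ℝ => t + h) (𝓝 (0:ℝ)) (𝓝 t) := by
          exact (continuous_const.add continuous_id).tendsto' (0:ℝ) t (by simp)
        exact h2.mono_left nhdsWithin_le_nhds
      exact ((cdfF_cont ν).tendsto t).comp h1
    · filter_upwards [self_mem_nhdsWithin] with h hh
      exact hstrict h hh
  set J := fun h : ℝ => Icc s (cdfF ν (t + h)) with hJ
  have hfam : Tendsto J (𝓝[>] 0) (vFam.filterAt s) :=
    (Real.tendsto_Icc_vitaliFamily_right s).comp htends'
  have havg : Tendsto (fun h : ℝ => ⨍ z in J h, ‖φ z - φ s‖ ∂volume) (𝓝[>] 0) (𝓝 0) :=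
    hAt.comp hfam
  have hB3 : Tendsto (fun h : ℝ => (lam1 (J h)).toReal / (volume (J h)).toReal)
      (𝓝[>] 0) (𝓝 0) := by
    have := (ENNReal.tendsto_toReal ENNReal.zero_ne_top).comp (hBt.comp hfam)
    simpa [Function.comp_def, ENNReal.toReal_div] using this
  have hC3 : Tendsto (fun h : ℝ => (lam2 (J h)).toReal / (volume (J h)).toReal)
      (𝓝[>] 0) (𝓝 0) := by
    have := (ENNReal.tendsto_toReal ENNReal.zero_ne_top).comp (hCt.comp hfam)
    simpa [Function.comp_def, ENNReal.toReal_div] using this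
  -- the global bound
  have hbound : ∀ h : ℝ, 0 < h →
      (∫ τ in Icc t (t + h), ‖f τ - f t‖ ∂(μd + ν)) / ((μd + ν) (Icc t (t + h))).toReal
        ≤ (⨍ z in J h, ‖φ z - φ s‖ ∂volume)
          + ((lam1 (J h)).toReal / (volume (J h)).toReal
            + ‖f t‖ * ((lam2 (J h)).toReal / (volume (J h)).toReal)) := by
    intro h hpos
    set I := Icc t (t + h) with hI
    set δ := cdfF ν (t + h) - s with hδ
    have hδpos : 0 < δ := sub_pos.2 (hstrict h hpos)
    have hss' : s ≤ cdfF ν (t + h) := (hstrict h hpos).le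
    have hJsub : J h ⊆ Icc 0 M := fun y hy =>
      ⟨le_trans hsmem.1 hy.1, le_trans hy.2 (cdfF_le_M ν hT hν0 hνT _)⟩
    have hvolJ : (volume (J h)).toReal = δ := by
      rw [hJ, Real.volume_Icc, ENNReal.toReal_ofReal hδpos.le]
    have hνI : (ν I).toReal = δ := by
      rw [hI, ← measure_congr (Ioc_ae_eq_Icc (μ := ν) (a := t) (b := t + h)),
        measure_Ioc_eq ν t (t + h) (by linarith), ENNReal.toReal_ofReal hδpos.le]
    -- numerator splitting
    have hint_c : Integrable (fun τ => ‖f τ - f t‖) (ν.restrict I) :=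
      ((hfν.restrict (s := I)).sub (integrable_const _)).norm
    have hint_d : Integrable (fun τ => ‖f τ - f t‖) (μd.restrict I) :=
      ((hfd.restrict (s := I)).sub (integrable_const _)).norm
    have hsplit : ∫ τ in I, ‖f τ - f t‖ ∂(μd + ν)
        = (∫ τ in I, ‖f τ - f t‖ ∂μd) + ∫ τ in I, ‖f τ - f t‖ ∂ν := by
      rw [Measure.restrict_add, integral_add_measure hint_d hint_c]
    -- continuous part equals the average numerator
    have hnumc : ∫ τ in I, ‖f τ - f t‖ ∂ν = ∫ z in J h, ‖φ z - φ s‖ ∂volume := by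
      rw [hI, numer_eq ν hT hν0 hνT f hfν.1 (f t) hGFt h hpos.le]
      refine (setIntegral_congr_fun measurableSet_Icc (fun y hy => ?_)).symm
      rw [hφs, hφ, indicator_of_mem (hJsub hy)]
    -- discrete part bound
    have hFmap : ∀ τ ∈ I, cdfF ν τ ∈ J h := fun τ hτ =>
      ⟨cdfF_mono ν hτ.1, cdfF_mono ν hτ.2⟩
    have hIsub : I ⊆ cdfF ν ⁻¹' (J h) := fun τ hτ => hFmap τ hτ
    have hlam1I : (ν₁ I).toReal ≤ (lam1 (J h)).toReal := by
      apply ENNReal.toReal_mono (measure_ne_top _ _)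
      rw [hlam1, Measure.map_apply hFm measurableSet_Icc]
      exact measure_mono hIsub
    have hlam2I : (μd I).toReal ≤ (lam2 (J h)).toReal := by
      apply ENNReal.toReal_mono (measure_ne_top _ _)
      rw [hlam2, Measure.map_apply hFm measurableSet_Icc]
      exact measure_mono hIsub
    have hnormint : ∫ τ in I, ‖f τ‖ ∂μd = (ν₁ I).toReal := by
      rw [hν₁, withDensity_apply _ measurableSet_Icc]
      rw [integral_eq_lintegral_of_nonneg_ae (Eventually.of_forall fun τ => norm_nonneg _)
        hfd.1.norm.restrict]
      congr 1
      apply lintegral_congr fun τ => ?_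
      exact ofReal_norm _
    have hnumd : ∫ τ in I, ‖f τ - f t‖ ∂μd
        ≤ (lam1 (J h)).toReal + ‖f t‖ * (μd I).toReal := by
      have h1 : ∫ τ in I, ‖f τ - f t‖ ∂μd ≤ ∫ τ in I, (‖f τ‖ + ‖f t‖) ∂μd := by
        apply integral_mono hint_d ((hfd.restrict (s := I)).norm.add (integrable_const _))
        intro τ
        exact norm_sub_le _ _
      have h2 : ∫ τ in I, (‖f τ‖ + ‖f t‖) ∂μd
          = (∫ τ in I, ‖f τ‖ ∂μd) + ‖f t‖ * (μd I).toReal := by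
        rw [integral_add (hfd.restrict (s := I)).norm (integrable_const _),
          setIntegral_const, smul_eq_mul, mul_comm, measureReal_def]
      calc ∫ τ in I, ‖f τ - f t‖ ∂μd ≤ ∫ τ in I, (‖f τ‖ + ‖f t‖) ∂μd := h1
      _ = (∫ τ in I, ‖f τ‖ ∂μd) + ‖f t‖ * (μd I).toReal := h2
      _ ≤ (lam1 (J h)).toReal + ‖f t‖ * (μd I).toReal := by
          rw [hnormint]; exact add_le_add_left hlam1I _
    -- denominator bound
    have hdenom : δ ≤ ((μd + ν) I).toReal := by
      rw [← hνI]
      apply ENNReal.toReal_mono (measure_ne_top _ _)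
      rw [Measure.add_apply]
      exact le_add_self
    have hnum_nonneg : 0 ≤ ∫ τ in I, ‖f τ - f t‖ ∂(μd + ν) :=
      integral_nonneg fun τ => norm_nonneg _
    have havg_eq : (⨍ z in J h, ‖φ z - φ s‖ ∂volume)
        = (∫ τ in I, ‖f τ - f t‖ ∂ν) / δ := by
      rw [setAverage_eq, measureReal_def, hnumc, hvolJ, smul_eq_mul, div_eq_inv_mul]
    calc (∫ τ in I, ‖f τ - f t‖ ∂(μd + ν)) / ((μd + ν) I).toReal
        ≤ (∫ τ in I, ‖f τ - f t‖ ∂(μd + ν)) / δ := by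
          gcongr
      _ = (∫ τ in I, ‖f τ - f t‖ ∂μd) / δ + (∫ τ in I, ‖f τ - f t‖ ∂ν) / δ := by
          rw [hsplit, add_div]
      _ ≤ ((lam1 (J h)).toReal + ‖f t‖ * (μd I).toReal) / δ
            + (∫ τ in I, ‖f τ - f t‖ ∂ν) / δ := by
          gcongr
      _ ≤ (⨍ z in J h, ‖φ z - φ s‖ ∂volume)
          + ((lam1 (J h)).toReal / (volume (J h)).toReal
            + ‖f t‖ * ((lam2 (J h)).toReal / (volume (J h)).toReal)) := by
          rw [havg_eq, hvolJ]
          rw [add_comm ((∫ τ in I, ‖f τ - f t‖ ∂ν) / δ)]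
          apply add_le_add_left
          rw [add_div, mul_div_assoc]
          gcongr
  -- conclude by squeezing
  apply squeeze_zero'
  · filter_upwards [self_mem_nhdsWithin] with h hh
    exact div_nonneg (integral_nonneg fun τ => norm_nonneg _) ENNReal.toReal_nonneg
  · filter_upwards [self_mem_nhdsWithin] with h hh
    exact hbound h hh
  · have := havg.add (hB3.add (hC3.const_mul ‖f t‖))
    simpa using this

end Part2

section Part1
variable {H : Type*} [NormedAddCommGroup H] [InnerProductSpace ℝ H] [CompleteSpace H]

lemma atom_point (μ : Measure ℝ) [IsFiniteMeasure μ]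
    (f : ℝ → H) (hf : Integrable f μ) (t : ℝ) (ht : μ {t} ≠ 0) :
    Tendsto (fun h : ℝ =>
        (∫ τ in Icc t (t + h), ‖f τ - f t‖ ∂μ) / (μ (Icc t (t + h))).toReal)
      (𝓝[>] 0) (𝓝 0) := by
  set κ := μ.withDensity (fun τ => (‖f τ - f t‖₊ : ℝ≥0∞)) with hκ
  haveI : IsFiniteMeasure κ := by
    constructor
    rw [hκ, withDensity_apply _ MeasurableSet.univ, setLIntegral_univ]
    exact (hf.sub (integrable_const (f t))).2
  have hκt : κ {t} = 0 := by
    rw [hκ, withDensity_apply _ (measurableSet_singleton t), Measure.restrict_singleton,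
      lintegral_smul_measure, lintegral_dirac]
    simp
  have hInter : (⋂ r, ⋂ (_ : r > (0:ℝ)), Icc t (t + r)) = {t} := by
    apply Subset.antisymm
    · intro x hx
      simp only [mem_iInter, mem_Icc, gt_iff_lt] at hx
      have h1 := (hx 1 one_pos).1
      have h2 : x ≤ t := by
        by_contra hlt
        push_neg at hlt
        obtain ⟨r, hr1, hr2⟩ := exists_between (sub_pos.2 hlt)
        have := (hx r hr1).2
        linarith
      simp [le_antisymm h2 h1]
    · intro x hx
      simp only [mem_singleton_iff] at hx
      subst hx
      simp only [mem_iInter, mem_Icc, gt_iff_lt]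
      intro r hr
      exact ⟨le_rfl, by linarith⟩
  have htendκ : Tendsto (fun h : ℝ => κ (Icc t (t + h))) (𝓝[>] 0) (𝓝 0) := by
    have := tendsto_measure_biInter_gt (μ := κ) (s := fun r => Icc t (t + r)) (a := 0)
      (fun r _ => measurableSet_Icc.nullMeasurableSet)
      (fun i j _ hij => Icc_subset_Icc_right (by linarith))
      ⟨1, one_pos, measure_ne_top _ _⟩
    simp only [Function.comp_def] at this
    rwa [hInter, hκt] at this
  have hbound : Tendsto (fun h : ℝ => (κ (Icc t (t + h))).toReal / (μ {t}).toReal)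
      (𝓝[>] 0) (𝓝 0) := by
    have h1 := (ENNReal.tendsto_toReal ENNReal.zero_ne_top).comp htendκ
    simp only [Function.comp_def, ENNReal.toReal_zero] at h1
    simpa using h1.div_const (μ {t}).toReal
  apply squeeze_zero' (g := fun h : ℝ => (κ (Icc t (t + h))).toReal / (μ {t}).toReal)
  · filter_upwards [self_mem_nhdsWithin] with h hh
    exact div_nonneg (integral_nonneg fun τ => norm_nonneg _) ENNReal.toReal_nonneg
  · filter_upwards [self_mem_nhdsWithin] with h hh
    have hnum : ∫ τ in Icc t (t + h), ‖f τ - f t‖ ∂μ = (κ (Icc t (t + h))).toReal := by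
      have h1 : AEStronglyMeasurable (fun τ => f τ - f t) (μ.restrict (Icc t (t + h))) :=
        hf.1.restrict.sub aestronglyMeasurable_const
      rw [hκ, withDensity_apply _ measurableSet_Icc]
      exact integral_norm_eq_lintegral_enorm h1
    rw [hnum]
    have hmono : (μ {t}).toReal ≤ (μ (Icc t (t + h))).toReal := by
      apply ENNReal.toReal_mono (measure_ne_top _ _)
      apply measure_mono
      intro x hx
      simp only [mem_singleton_iff] at hx
      subst hx
      exact ⟨le_rfl, by simp [mem_Ioi] at hh; linarith⟩
    have hpos : 0 < (μ {t}).toReal :=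
      ENNReal.toReal_pos ht (measure_ne_top _ _)
    exact div_le_div_of_nonneg_left ENNReal.toReal_nonneg hpos hmono
  · exact hbound
end Part1

/-- Right `μ`-Lebesgue points: if `μ` is a positive Borel measure carried by `[0,T)` which is
finite on compact sets and `f` is Bochner `μ`-integrable, then for `μ`-a.e. `t ∈ [0,T)` one has
`(1/μ([t,t+h])) ∫_{[t,t+h]} ‖f(τ) − f(t)‖ dμ(τ) → 0` as `h ↓ 0`. -/
theorem ae_right_lebesgue_point
    [CompleteSpace H]
    (T : ℝ) (hT : 0 < T)
    (μ : Measure ℝ) [IsFiniteMeasureOnCompacts μ]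
    (hμ0 : μ (Iio 0) = 0) (hμT : μ (Ici T) = 0)
    (f : ℝ → H) (hf : Integrable f μ) :
    ∀ᵐ t ∂μ, t ∈ Ico 0 T →
      Tendsto (fun h : ℝ =>
          (∫ τ in Icc t (t + h), ‖f τ - f t‖ ∂μ) / (μ (Icc t (t + h))).toReal)
        (𝓝[>] 0) (𝓝 0) := by
  haveI : IsFiniteMeasure μ := by
    constructor
    have hcover : (univ : Set ℝ) ⊆ Iio 0 ∪ (Icc 0 T ∪ Ici T) := by
      intro x _
      rcases lt_or_ge x 0 with h | h
      · exact Or.inl h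
      rcases le_or_gt x T with h2 | h2
      · exact Or.inr (Or.inl ⟨h, h2⟩)
      · exact Or.inr (Or.inr h2.le)
    calc μ univ ≤ μ (Iio 0 ∪ (Icc 0 T ∪ Ici T)) := measure_mono hcover
    _ ≤ μ (Iio 0) + (μ (Icc 0 T) + μ (Ici T)) :=
        le_trans (measure_union_le _ _) (by gcongr; exact measure_union_le _ _)
    _ < ∞ := by
        rw [hμ0, hμT, zero_add, add_zero]
        exact isCompact_Icc.measure_lt_top
  set D := {x : ℝ | μ {x} ≠ 0} with hD
  have hDc : D.Countable := by
    have := Measure.countable_meas_pos_of_disjoint_iUnion (μ := μ)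
      (As := fun x : ℝ => {x}) (fun x => measurableSet_singleton x)
      (fun x y hxy => by simp [Function.onFun, hxy])
    apply this.mono
    intro x hx
    simp only [mem_setOf_eq] at hx ⊢
    exact pos_iff_ne_zero.2 hx
  have hDm : MeasurableSet D := hDc.measurableSet
  set ν := μ.restrict Dᶜ with hν
  set μd := μ.restrict D with hμd
  haveI : NullSingletonClass ν := by
    constructor
    intro x
    rw [hν, Measure.restrict_apply (measurableSet_singleton x)]
    by_cases hx : x ∈ D
    · have : {x} ∩ Dᶜ = ∅ := by
        apply eq_empty_of_forall_notMem
        rintro y ⟨hy1, hy2⟩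
        simp only [mem_singleton_iff] at hy1
        subst hy1
        exact hy2 hx
      rw [this]; simp
    · simp only [hD, mem_setOf_eq, not_not] at hx
      exact measure_mono_null inter_subset_left hx
  have hsum : μd + ν = μ := Measure.restrict_add_restrict_compl hDm
  have hν0 : ν (Iio 0) = 0 :=
    le_antisymm (le_trans (Measure.restrict_le_self _) hμ0.le) zero_le
  have hνT : ν (Ici T) = 0 :=
    le_antisymm (le_trans (Measure.restrict_le_self _) hμT.le) zero_le
  have hcar : μd Dᶜ = 0 := by
    rw [hμd, Measure.restrict_apply' hDm]
    simp
  have h2 := part2 T hT ν μd hν0 hνT D hDc hcar f (hf.restrict) (hf.restrict)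
  rw [hsum] at h2
  rw [ae_iff]
  set bad := {t : ℝ | ¬(t ∈ Ico 0 T →
      Tendsto (fun h : ℝ =>
          (∫ τ in Icc t (t + h), ‖f τ - f t‖ ∂μ) / (μ (Icc t (t + h))).toReal)
        (𝓝[>] 0) (𝓝 0))} with hbad
  have hbadd : μd bad = 0 := by
    rw [hμd, Measure.restrict_apply' hDm]
    have : bad ∩ D = ∅ := by
      apply eq_empty_of_forall_notMem
      rintro t ⟨ht1, ht2⟩
      simp only [hD, mem_setOf_eq] at ht2
      exact ht1 (fun _ => atom_point μ f hf t ht2)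
    rw [this]; simp
  have hbadν : ν bad = 0 := ae_iff.1 h2
  calc μ bad = (μd + ν) bad := by rw [hsum]
  _ = μd bad + ν bad := Measure.add_apply _ _ _
  _ = 0 := by rw [hbadd, hbadν, add_zero]
end
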